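/- arXiv:1010.1455 — 8 statements merged into one kernel-verified Lean document; each statement's English description precedes it below -/
import Mathlib

section
/- In the game of Nim on graphs played on a path with an odd number of edges, all of whose edges have positive integer weight, with the indicator piece starting at an endpoint (a vertex of degree one), the first player has a winning strategy. -/
/-- A position of Nim on graphs: a symmetric non-negative integer weight
function on pairs of vertices (the weighted graph; weight-zero pairs are
non-edges) plus the location of the indicator piece. -/
structure NimPos (V : Type) where
  w : V → V → ℕ
  symm : ∀ u v, w u v = w v u
  pos : V

/-- A legal move: decrease the weight of an edge incident with the piece to a
strictly smaller value and move the piece along it; all other weights stay. -/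
def NimMove {V : Type} (p q : NimPos V) : Prop :=
  p.pos ≠ q.pos ∧
  q.w p.pos q.pos < p.w p.pos q.pos ∧
  ∀ u v, ¬((u = p.pos ∧ v = q.pos) ∨ (u = q.pos ∧ v = p.pos)) → q.w u v = p.w u v

/-- The player to move loses (the position is a 0-position): the opponent has
a winning strategy `f` answering every move. -/
inductive MoverLoses {V : Type} : NimPos V → Prop
  | intro (p : NimPos V) (f : ∀ q, NimMove p q → NimPos V)
      (hmove : ∀ q (h : NimMove p q), NimMove q (f q h))
      (hwin : ∀ q (h : NimMove p q), MoverLoses (f q h)) : MoverLoses p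

/-- The player to move wins (the position is a p-position). -/
def MoverWins {V : Type} (p : NimPos V) : Prop :=
  ∃ q, NimMove p q ∧ MoverLoses q

/-- Weights of the path on vertices `0,…,n` of `Fin (n+1)`: edge `i — i+1` has weight `ω i`. -/
def pathW (n : ℕ) (ω : ℕ → ℕ) (u v : Fin (n+1)) : ℕ :=
  if u.val + 1 = v.val then ω u.val
  else if v.val + 1 = u.val then ω v.val else 0

theorem pathW_symm (n : ℕ) (ω : ℕ → ℕ) : ∀ u v, pathW n ω u v = pathW n ω v u := by
  intro u v; unfold pathW; split_ifs <;> first | rfl | (exfalso; omega)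

/-- Weights of the cycle on `Fin m` (`m ≥ 3`): edge `i — (i+1) % m` has weight `ω i`. -/
def cycW (m : ℕ) (ω : ℕ → ℕ) (u v : Fin m) : ℕ :=
  (if (u.val + 1) % m = v.val then ω u.val else 0) +
  (if (v.val + 1) % m = u.val then ω v.val else 0)

theorem cycW_symm (m : ℕ) (ω : ℕ → ℕ) : ∀ u v, cycW m ω u v = cycW m ω v u :=
  fun _ _ => Nat.add_comm _ _

/-- Weight-1 complete bipartite graph `K_{2,j}`: part `{0,1}` and part `{2,…,j+1}`. -/
def k2W (j : ℕ) (u v : Fin (j+2)) : ℕ :=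
  if (u.val < 2 ∧ 2 ≤ v.val) ∨ (v.val < 2 ∧ 2 ≤ u.val) then 1 else 0

theorem k2W_symm (j : ℕ) : ∀ u v, k2W j u v = k2W j v u := by
  intro u v; unfold k2W; split_ifs <;> omega

/-- Weight-1 `SSB_j = K_{2,j} + e_{12}`: `K_{2,j}` plus the edge `0 — 1`. -/
def ssbW (j : ℕ) (u v : Fin (j+2)) : ℕ :=
  if ((u.val < 2 ∧ 2 ≤ v.val) ∨ (v.val < 2 ∧ 2 ≤ u.val)) ∨
      (u.val < 2 ∧ v.val < 2 ∧ u.val ≠ v.val) then 1 else 0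

theorem ssbW_symm (j : ℕ) : ∀ u v, ssbW j u v = ssbW j v u := by
  intro u v; unfold ssbW; split_ifs <;> omega

/-- Weight-1 complete graph `K_n`. -/
def knW (n : ℕ) (u v : Fin n) : ℕ := if u.val ≠ v.val then 1 else 0

theorem knW_symm (n : ℕ) : ∀ u v, knW n u v = knW n v u := by
  intro u v; unfold knW; split_ifs <;> omega

/-- Length of the maximal all-positive run of cycle edges clockwise from vertex `s`. -/
noncomputable def fwdLen (m : ℕ) (w : ℕ → ℕ) (s : ℕ) : ℕ :=
  sSup {d | d ≤ m ∧ ∀ i < d, 0 < w ((s + i) % m)}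

/-- Length of the maximal all-positive run of cycle edges counterclockwise from vertex `s`. -/
noncomputable def bwdLen (m : ℕ) (w : ℕ → ℕ) (s : ℕ) : ℕ :=
  sSup {d | d ≤ m ∧ ∀ i < d, 0 < w ((s + m - 1 - i) % m)}

section Aux
variable {V : Type} [DecidableEq V]

/-- Zero out the weight of the pair `(x,y)` (both directions). -/
def zeroEdge (w : V → V → ℕ) (x y : V) : V → V → ℕ :=
  fun u v => if (u = x ∧ v = y) ∨ (u = y ∧ v = x) then 0 else w u v

theorem zeroEdge_symm {w : V → V → ℕ} (hs : ∀ u v, w u v = w v u) (x y : V) :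
    ∀ u v, zeroEdge w x y u v = zeroEdge w x y v u := by
  intro u v; unfold zeroEdge; split_ifs with h1 h2 <;> first | rfl | tauto | exact hs u v

/-- Move from `q.pos` to `t`, setting the traversed edge's weight to `0`. -/
def moveZero (q : NimPos V) (t : V) : NimPos V :=
  ⟨zeroEdge q.w q.pos t, zeroEdge_symm q.symm q.pos t, t⟩

theorem nimMove_moveZero (q : NimPos V) (t : V) (h1 : q.pos ≠ t)
    (h2 : 0 < q.w q.pos t) : NimMove q (moveZero q t) := by
  refine ⟨h1, ?_, ?_⟩
  · show zeroEdge q.w q.pos t q.pos t < q.w q.pos t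
    rw [zeroEdge, if_pos (Or.inl ⟨rfl, rfl⟩)]; exact h2
  · intro u v huv
    show zeroEdge q.w q.pos t u v = q.w u v
    rw [zeroEdge, if_neg]
    intro hc; exact huv (by tauto)

/-- If no positive edge is incident with the piece, the mover loses. -/
theorem deadLoses (p : NimPos V) (h : ∀ t, p.w p.pos t = 0) : MoverLoses p := by
  refine MoverLoses.intro p
    (fun q hq => absurd hq.2.1 (by rw [h q.pos]; exact Nat.not_lt_zero _)) ?_ ?_ <;>
    · intro q hq
      exact absurd hq.2.1 (by rw [h q.pos]; exact Nat.not_lt_zero _)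

end Aux

/-- Invariant: every positive edge is a path edge `i — i+1` with `s ≤ i`,
and all path edges `i — i+1` with `s ≤ i < n` are positive. -/
def PathInv (n s : ℕ) (w : Fin (n+1) → Fin (n+1) → ℕ) : Prop :=
  (∀ u v : Fin (n+1), w u v ≠ 0 →
      (u.val + 1 = v.val ∧ s ≤ u.val) ∨ (v.val + 1 = u.val ∧ s ≤ v.val)) ∧
  (∀ i, s ≤ i → ∀ h : i < n, 0 < w ⟨i, by omega⟩ ⟨i+1, by omega⟩)

theorem key (n : ℕ) (m : ℕ) : ∀ p : NimPos (Fin (n+1)),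
    p.pos.val + 2*m = n → PathInv n p.pos.val p.w → MoverLoses p := by
  induction m with
  | zero =>
    intro p hpn hinv
    apply deadLoses
    intro t
    by_contra hne
    rcases hinv.1 p.pos t hne with ⟨h1, h2⟩ | ⟨h1, h2⟩
    · exact absurd t.isLt (by omega)
    · omega
  | succ m ih =>
    intro p hpn hinv
    have hs2 : p.pos.val + 2 < n + 1 := by omega
    refine MoverLoses.intro p
      (fun q hq => if q.w p.pos q.pos = 0 then moveZero q ⟨p.pos.val + 2, hs2⟩
                   else moveZero q p.pos) ?_ ?_
    · -- the response is a legal move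
      intro q hq
      have hpw : p.w p.pos q.pos ≠ 0 := by have := hq.2.1; omega
      have hqpos : q.pos.val = p.pos.val + 1 := by
        rcases hinv.1 p.pos q.pos hpw with ⟨h1, h2⟩ | ⟨h1, h2⟩ <;> omega
      have hne : p.pos ≠ q.pos := hq.1
      by_cases h0 : q.w p.pos q.pos = 0
      · simp only [if_pos h0]
        refine nimMove_moveZero q ⟨p.pos.val + 2, hs2⟩ (Fin.ne_of_val_ne (by simp only [Fin.val_mk]; omega)) ?_
        have hunch : q.w q.pos ⟨p.pos.val + 2, hs2⟩ = p.w q.pos ⟨p.pos.val + 2, hs2⟩ := by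
          apply hq.2.2
          simp only [Fin.ext_iff, not_or, not_and]
          omega
        rw [hunch]
        have hq1 : q.pos = ⟨p.pos.val + 1, by omega⟩ := Fin.ext hqpos
        rw [hq1]
        exact hinv.2 (p.pos.val + 1) (by omega) (by omega)
      · simp only [if_neg h0]
        refine nimMove_moveZero q p.pos (Fin.ne_of_val_ne (by omega)) ?_
        rw [q.symm]; omega
    · -- the response is winning
      intro q hq
      have hpw : p.w p.pos q.pos ≠ 0 := by have := hq.2.1; omega
      have hqpos : q.pos.val = p.pos.val + 1 := by
        rcases hinv.1 p.pos q.pos hpw with ⟨h1, h2⟩ | ⟨h1, h2⟩ <;> omega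
      have hne : p.pos ≠ q.pos := hq.1
      by_cases h0 : q.w p.pos q.pos = 0
      · simp only [if_pos h0]
        apply ih
        · show p.pos.val + 2 + 2 * m = n
          omega
        · constructor
          · intro u v huv
            have hq0 : q.w u v ≠ 0 := by
              simp only [moveZero, zeroEdge] at huv
              split at huv
              · exact absurd rfl huv
              · exact huv
            have hcond : ¬((u = q.pos ∧ v = (⟨p.pos.val + 2, hs2⟩ : Fin (n+1))) ∨
                (u = (⟨p.pos.val + 2, hs2⟩ : Fin (n+1)) ∧ v = q.pos)) := by
              simp only [moveZero, zeroEdge] at huv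
              intro hc
              rw [if_pos hc] at huv
              exact huv rfl
            have huv' : q.w u v = p.w u v := by
              apply hq.2.2
              intro hc
              rcases hc with ⟨h1, h2⟩ | ⟨h1, h2⟩
              · subst h1; subst h2; exact hq0 h0
              · subst h1; subst h2; rw [q.symm] at hq0; exact hq0 h0
            have hp0 : p.w u v ≠ 0 := huv' ▸ hq0
            simp only [Fin.ext_iff, not_or, not_and] at hcond
            rcases hinv.1 u v hp0 with ⟨h1, h2⟩ | ⟨h1, h2⟩
            · left; refine ⟨h1, ?_⟩
              rcases Nat.lt_or_ge u.val (p.pos.val + 2) with hu | hu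
              · exfalso
                rcases Nat.eq_or_lt_of_le h2 with he | hl
                · have hu' : u = p.pos := Fin.ext he.symm
                  have hv' : v = q.pos := Fin.ext (by omega)
                  rw [hu', hv'] at hq0; exact hq0 h0
                · exact hcond.1 (by omega) (by omega)
              · exact hu
            · right; refine ⟨h1, ?_⟩
              rcases Nat.lt_or_ge v.val (p.pos.val + 2) with hv | hv
              · exfalso
                rcases Nat.eq_or_lt_of_le h2 with he | hl
                · have hv' : v = p.pos := Fin.ext he.symm
                  have hu' : u = q.pos := Fin.ext (by omega)
                  rw [hu', hv', q.symm] at hq0; exact hq0 h0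
                · exact hcond.2 (by omega) (by omega)
              · exact hv
          · intro i hi hlt
            have hi' : p.pos.val + 2 <= i := hi
            show zeroEdge q.w q.pos _ _ _ > 0
            rw [zeroEdge, if_neg, hq.2.2]
            · exact hinv.2 i (by omega) hlt
            · simp only [Fin.ext_iff, not_or, not_and]
              omega
            · simp only [Fin.ext_iff, not_or, not_and]
              omega
      · simp only [if_neg h0]
        apply deadLoses
        intro t
        show zeroEdge q.w q.pos p.pos p.pos t = 0
        by_cases ht : t = q.pos
        · rw [zeroEdge, if_pos (Or.inr ⟨rfl, ht⟩)]
        · rw [zeroEdge, if_neg (by tauto)]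
          have heq : q.w p.pos t = p.w p.pos t := by
            apply hq.2.2
            intro hc
            rcases hc with ⟨h1, h2⟩ | ⟨h1, h2⟩
            · exact ht h2
            · exact hne h1
          rw [heq]
          by_contra hz
          rcases hinv.1 p.pos t hz with ⟨h1, h2⟩ | ⟨h1, h2⟩
          · exact ht (Fin.ext (by omega))
          · omega


/-- Nim on a path with an odd number `n` of edges, all weights
positive, piece starting at an endpoint: the first player wins. -/
theorem stmt0 (n : ℕ) (hn : Odd n) (ω : ℕ → ℕ) (hω : ∀ i < n, 0 < ω i) :
    MoverWins ⟨pathW n ω, pathW_symm n ω, (0 : Fin (n+1))⟩ := by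
  obtain ⟨k, hk⟩ := hn
  have hn1 : 1 ≤ n := by omega
  set p₀ : NimPos (Fin (n+1)) := ⟨pathW n ω, pathW_symm n ω, (0 : Fin (n+1))⟩ with hp₀
  have h1 : (1 : ℕ) < n + 1 := by omega
  refine ⟨moveZero p₀ ⟨1, h1⟩, nimMove_moveZero p₀ ⟨1, h1⟩ (Fin.ne_of_val_ne (by simp [hp₀])) ?_, ?_⟩
  · show 0 < pathW n ω (0 : Fin (n+1)) ⟨1, h1⟩
    rw [pathW, if_pos (by simp)]
    exact hω 0 (by omega)
  · apply key n k
    · show (1 : ℕ) + 2 * k = n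
      omega
    · constructor
      · intro u v huv
        have huv' : zeroEdge (pathW n ω) p₀.pos ⟨1, h1⟩ u v ≠ 0 := huv
        rw [zeroEdge] at huv'
        have hq0 : pathW n ω u v ≠ 0 := by
          split at huv'
          · exact absurd rfl huv'
          · exact huv'
        have hcond : ¬((u = p₀.pos ∧ v = (⟨1, h1⟩ : Fin (n+1))) ∨
            (u = (⟨1, h1⟩ : Fin (n+1)) ∧ v = p₀.pos)) := by
          intro hc
          rw [if_pos hc] at huv'
          exact huv' rfl
        simp only [Fin.ext_iff, not_or, not_and, hp₀] at hcond
        simp only [moveZero, Fin.val_mk]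
        rw [pathW] at hq0
        split_ifs at hq0 with ha hb
        · left
          refine ⟨ha, ?_⟩
          rcases Nat.eq_zero_or_pos u.val with h | h
          · exfalso; exact hcond.1 (by simp [h]) (by omega)
          · omega
        · right
          refine ⟨hb, ?_⟩
          rcases Nat.eq_zero_or_pos v.val with h | h
          · exfalso; exact hcond.2 (by omega) (by simp [h])
          · omega
        · exact absurd rfl hq0
      · intro i hi hlt
        simp only [moveZero, Fin.val_mk] at hi
        show 0 < zeroEdge (pathW n ω) p₀.pos ⟨1, h1⟩ ⟨i, by omega⟩ ⟨i+1, by omega⟩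
        rw [zeroEdge, if_neg, pathW, if_pos rfl]
        · exact hω i hlt
        · simp only [Fin.ext_iff, not_or, not_and, hp₀, Fin.val_mk, Fin.val_zero]
          omega
end

section
/- In Nim on graphs played on a path, if the indicator piece starts at an interior vertex such that both subpaths from the piece to the two endpoints have an even number of edges, then the position is a 0-position (the player to move loses under optimal play). -/
section Aux

open Finset

lemma loses_of_responses {V : Type} (p : NimPos V)
    (h : ∀ q, NimMove p q → ∃ r, NimMove q r ∧ MoverLoses r) : MoverLoses p := by
  choose f h1 h2 using h
  exact MoverLoses.intro p f h1 h2

lemma pathW_eq₁ {n : ℕ} {ω : ℕ → ℕ} {u v : Fin (n+1)} (h : u.val + 1 = v.val) :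
    pathW n ω u v = ω u.val := by
  unfold pathW; rw [if_pos h]

lemma pathW_eq₂ {n : ℕ} {ω : ℕ → ℕ} {u v : Fin (n+1)} (h : v.val + 1 = u.val) :
    pathW n ω u v = ω v.val := by
  unfold pathW; rw [if_neg (by omega), if_pos h]

lemma pathW_update {n : ℕ} {ω : ℕ → ℕ} {k x : ℕ} {u v : Fin (n+1)}
    (h1 : ¬(u.val = k ∧ v.val = k+1)) (h2 : ¬(v.val = k ∧ u.val = k+1)) :
    pathW n (Function.update ω k x) u v = pathW n ω u v := by
  unfold pathW
  simp only [Function.update_apply]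
  split_ifs <;> first | rfl | omega

lemma sum_le_sum_update {n k : ℕ} (ω : ℕ → ℕ) (hk : k < n) (hpos : 0 < ω k) :
    ∀ g : ℕ → ℕ, (∀ i, g i ≤ ω i) → g k = 0 →
    ∑ i ∈ Finset.range n, g i < ∑ i ∈ Finset.range n, ω i := by
  intro g hle h0
  exact Finset.sum_lt_sum (fun i _ => hle i) ⟨k, Finset.mem_range.2 hk, by omega⟩

lemma key_s2 (n : ℕ) : ∀ T (ω : ℕ → ℕ) (s : ℕ) (hs : s ≤ n),
    (∑ i ∈ Finset.range n, ω i) ≤ T →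
    ∀ a b : ℕ, a ≤ s → s + b ≤ n → Even a → Even b →
    (∀ i < a, 0 < ω (s - 1 - i)) → (a = s ∨ ω (s - 1 - a) = 0) →
    (∀ i < b, 0 < ω (s + i)) → (s + b = n ∨ ω (s + b) = 0) →
    MoverLoses ⟨pathW n ω, pathW_symm n ω, ⟨s, Nat.lt_succ_of_le hs⟩⟩ := by
  intro T
  induction T using Nat.strong_induction_on with
  | _ T IH =>
  intro ω s hs hT a b hab hsb hea heb hA hA0 hB hB0
  apply loses_of_responses
  rintro q ⟨hne, hlt, hrest⟩
  simp only at hne hlt hrest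
  set s' : Fin (n+1) := ⟨s, Nat.lt_succ_of_le hs⟩ with hs'def
  have hs'v : s'.val = s := rfl
  -- q.w agrees with pathW n ω off the moved edge
  have hq : ∀ u v : Fin (n+1),
      (¬(u.val = s ∧ v.val = q.pos.val) ∧ ¬(v.val = s ∧ u.val = q.pos.val)) →
      q.w u v = pathW n ω u v := by
    intro u v h
    apply hrest
    rintro (⟨h1, h2⟩ | ⟨h1, h2⟩)
    · exact h.1 ⟨by rw [h1], by rw [h2]⟩
    · exact h.2 ⟨by rw [h2], by rw [h1]⟩
  have hadj : (q.pos.val = s + 1 ∧ 0 < ω s) ∨ (q.pos.val + 1 = s ∧ 0 < ω q.pos.val) := by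
    have h0 : 0 < pathW n ω s' q.pos := Nat.lt_of_le_of_lt (Nat.zero_le _) hlt
    unfold pathW at h0
    rw [hs'v] at h0
    split_ifs at h0 with h1 h2
    · left; exact ⟨h1.symm, h0⟩
    · right; exact ⟨h2, h0⟩
    · omega
  have htn : q.pos.val ≤ n := Nat.lt_succ_iff.mp q.pos.isLt
  rcases hadj with ⟨ht, hωs⟩ | ⟨ht, hωt⟩
  · -- FORWARD move: q.pos = s+1
    have hc : q.w s' q.pos < ω s := by
      have h := hlt
      rwa [pathW_eq₁ (show s'.val + 1 = q.pos.val by omega)] at h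
    have hb2 : 2 ≤ b := by
      rcases Nat.eq_zero_or_pos b with hb0 | hb1
      · subst hb0
        rcases hB0 with h | h
        · omega
        · rw [Nat.add_zero] at h; omega
      · obtain ⟨r, hr⟩ := heb; omega
    by_cases hc0 : q.w s' q.pos = 0
    · -- opponent zeroed the edge: move further forward, zeroing the next edge
      have hpos2 : s + 2 < n + 1 := by omega
      set ω₂ : ℕ → ℕ := Function.update (Function.update ω s 0) (s+1) 0 with hω₂
      have hω₂le : ∀ i, ω₂ i ≤ ω i := by
        intro i
        rw [hω₂, Function.update_apply, Function.update_apply]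
        split_ifs <;> omega
      have hω₂s : ω₂ s = 0 := by
        rw [hω₂, Function.update_apply, if_neg (by omega), Function.update_apply, if_pos rfl]
      have hω₂s1 : ω₂ (s+1) = 0 := by
        rw [hω₂, Function.update_apply, if_pos rfl]
      refine ⟨⟨pathW n ω₂, pathW_symm n ω₂, ⟨s+2, hpos2⟩⟩, ⟨?_, ?_, ?_⟩, ?_⟩
      · intro h
        have h' : q.pos.val = s + 2 := congrArg Fin.val h
        omega
      · show pathW n ω₂ q.pos ⟨s+2, hpos2⟩ < q.w q.pos ⟨s+2, hpos2⟩
        have e1 : q.pos.val + 1 = (⟨s+2, hpos2⟩ : Fin (n+1)).val := by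
          show q.pos.val + 1 = s + 2; omega
        rw [pathW_eq₁ e1, hq q.pos ⟨s+2, hpos2⟩ ⟨(by omega : ¬(q.pos.val = s ∧ s + 2 = q.pos.val)),
            (by omega : ¬(s + 2 = s ∧ q.pos.val = q.pos.val))⟩,
          pathW_eq₁ e1, ht]
        have h1 := hB 1 (by omega)
        have hω₂t : ω₂ q.pos.val = 0 := by rw [ht]; exact hω₂s1
        omega
      · intro u v huv
        show pathW n ω₂ u v = q.w u v
        have hval : ¬(u.val = q.pos.val ∧ v.val = s + 2) ∧
            ¬(v.val = q.pos.val ∧ u.val = s + 2) := by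
          constructor <;> rintro ⟨h1, h2⟩ <;> apply huv
          · exact Or.inl ⟨Fin.val_injective h1, Fin.val_injective h2⟩
          · exact Or.inr ⟨Fin.val_injective h2, Fin.val_injective h1⟩
        by_cases h1 : (u.val = s ∧ v.val = q.pos.val) ∨ (v.val = s ∧ u.val = q.pos.val)
        · rcases h1 with ⟨hu, hv⟩ | ⟨hv, hu⟩
          · have hu' : u = s' := Fin.val_injective hu
            have hv' : v = q.pos := Fin.val_injective hv
            rw [hu', hv', pathW_eq₁ (show s'.val + 1 = q.pos.val by omega)]
            show ω₂ s = q.w s' q.pos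
            omega
          · have hv' : v = s' := Fin.val_injective hv
            have hu' : u = q.pos := Fin.val_injective hu
            rw [hu', hv', pathW_eq₂ (show s'.val + 1 = q.pos.val by omega)]
            show ω₂ s = q.w q.pos s'
            rw [q.symm q.pos s']
            omega
        · rw [hω₂, pathW_update (by omega) (by omega), pathW_update (by omega) (by omega)]
          exact (hq u v ⟨by omega, by omega⟩).symm
      · have hsum : (∑ i ∈ Finset.range n, ω₂ i) < T :=
          lt_of_lt_of_le (sum_le_sum_update ω (by omega) hωs ω₂ hω₂le hω₂s) hT
        have hEb : Even (b - 2) := by obtain ⟨r, hr⟩ := heb; exact ⟨r - 1, by omega⟩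
        have hB' : ∀ i < b - 2, 0 < ω₂ (s + 2 + i) := by
          intro i hi
          have h := hB (i + 2) (by omega)
          have e : s + (i + 2) = s + 2 + i := by omega
          rw [e] at h
          rw [hω₂, Function.update_apply, if_neg (by omega), Function.update_apply,
            if_neg (by omega)]
          exact h
        have hB0' : s + 2 + (b - 2) = n ∨ ω₂ (s + 2 + (b - 2)) = 0 := by
          rcases hB0 with h | h
          · exact Or.inl (by omega)
          · right
            have e : s + 2 + (b - 2) = s + b := by omega
            rw [e, hω₂, Function.update_apply, if_neg (by omega), Function.update_apply,
              if_neg (by omega)]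
            exact h
        exact IH _ hsum ω₂ (s+2) (by omega) le_rfl 0 (b-2) (by omega) (by omega)
          Even.zero hEb (by intro i hi; omega) (Or.inr (by simpa using hω₂s1))
          hB' hB0'
    · -- opponent left the edge positive: move back, zeroing the edge
      set ω₁ : ℕ → ℕ := Function.update ω s 0 with hω₁
      have hω₁le : ∀ i, ω₁ i ≤ ω i := by
        intro i; rw [hω₁, Function.update_apply]; split_ifs <;> omega
      have hω₁s : ω₁ s = 0 := by rw [hω₁, Function.update_apply, if_pos rfl]
      refine ⟨⟨pathW n ω₁, pathW_symm n ω₁, s'⟩, ⟨?_, ?_, ?_⟩, ?_⟩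
      · intro h
        have h' : q.pos.val = s := congrArg Fin.val h
        omega
      · show pathW n ω₁ q.pos s' < q.w q.pos s'
        rw [pathW_eq₂ (show s'.val + 1 = q.pos.val by omega), q.symm q.pos s']
        show ω₁ s < q.w s' q.pos
        omega
      · intro u v huv
        show pathW n ω₁ u v = q.w u v
        have hval : ¬(u.val = q.pos.val ∧ v.val = s) ∧
            ¬(u.val = s ∧ v.val = q.pos.val) := by
          constructor <;> rintro ⟨h1, h2⟩ <;> apply huv
          · exact Or.inl ⟨Fin.val_injective h1, Fin.val_injective h2⟩
          · exact Or.inr ⟨Fin.val_injective h1, Fin.val_injective h2⟩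
        rw [hω₁, pathW_update (by omega) (by omega)]
        exact (hq u v ⟨by omega, by omega⟩).symm
      · have hsum : (∑ i ∈ Finset.range n, ω₁ i) < T :=
          lt_of_lt_of_le (sum_le_sum_update ω (by omega) hωs ω₁ hω₁le hω₁s) hT
        have hA' : ∀ i < a, 0 < ω₁ (s - 1 - i) := by
          intro i hi
          rw [hω₁, Function.update_apply, if_neg (by omega)]
          exact hA i hi
        have hA0' : a = s ∨ ω₁ (s - 1 - a) = 0 := by
          by_cases has : a = s
          · exact Or.inl has
          · right
            rw [hω₁, Function.update_apply, if_neg (by omega)]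
            rcases hA0 with h | h
            · omega
            · exact h
        exact IH _ hsum ω₁ s hs le_rfl a 0 hab (by omega) hea Even.zero
          hA' hA0' (by intro i hi; omega) (Or.inr (by simpa using hω₁s))
  · -- BACKWARD move: q.pos = s-1
    have hs1 : 1 ≤ s := by omega
    have hc : q.w s' q.pos < ω q.pos.val := by
      have h := hlt
      rwa [pathW_eq₂ (show q.pos.val + 1 = s'.val by omega)] at h
    have ha2 : 2 ≤ a := by
      rcases Nat.eq_zero_or_pos a with ha0 | ha1
      · subst ha0
        rcases hA0 with h | h
        · omega
        · rw [show s - 1 - 0 = q.pos.val by omega] at h; omega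
      · obtain ⟨r, hr⟩ := hea; omega
    have hs2 : 2 ≤ s := by omega
    by_cases hc0 : q.w s' q.pos = 0
    · -- opponent zeroed the edge: move further backward, zeroing the next edge
      have hpos2 : s - 2 < n + 1 := by omega
      set ω₂ : ℕ → ℕ := Function.update (Function.update ω (s-1) 0) (s-2) 0 with hω₂
      have hω₂le : ∀ i, ω₂ i ≤ ω i := by
        intro i
        rw [hω₂, Function.update_apply, Function.update_apply]
        split_ifs <;> omega
      have hω₂s1 : ω₂ (s-1) = 0 := by
        rw [hω₂, Function.update_apply, if_neg (by omega), Function.update_apply, if_pos rfl]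
      have hω₂s2 : ω₂ (s-2) = 0 := by
        rw [hω₂, Function.update_apply, if_pos rfl]
      refine ⟨⟨pathW n ω₂, pathW_symm n ω₂, ⟨s-2, hpos2⟩⟩, ⟨?_, ?_, ?_⟩, ?_⟩
      · intro h
        have h' : q.pos.val = s - 2 := congrArg Fin.val h
        omega
      · show pathW n ω₂ q.pos ⟨s-2, hpos2⟩ < q.w q.pos ⟨s-2, hpos2⟩
        have e1 : (⟨s-2, hpos2⟩ : Fin (n+1)).val + 1 = q.pos.val := by
          show s - 2 + 1 = q.pos.val; omega
        rw [pathW_eq₂ e1, hq q.pos ⟨s-2, hpos2⟩ ⟨(by omega : ¬(q.pos.val = s ∧ s - 2 = q.pos.val)),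
            (by omega : ¬(s - 2 = s ∧ q.pos.val = q.pos.val))⟩, pathW_eq₂ e1]
        show ω₂ (s-2) < ω (s-2)
        have h1 := hA 1 (by omega)
        rw [show s - 1 - 1 = s - 2 by omega] at h1
        omega
      · intro u v huv
        show pathW n ω₂ u v = q.w u v
        have hval : ¬(u.val = q.pos.val ∧ v.val = s - 2) ∧
            ¬(v.val = q.pos.val ∧ u.val = s - 2) := by
          constructor <;> rintro ⟨h1, h2⟩ <;> apply huv
          · exact Or.inl ⟨Fin.val_injective h1, Fin.val_injective h2⟩
          · exact Or.inr ⟨Fin.val_injective h2, Fin.val_injective h1⟩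
        by_cases h1 : (u.val = s ∧ v.val = q.pos.val) ∨ (v.val = s ∧ u.val = q.pos.val)
        · have hω₂t : ω₂ q.pos.val = 0 := by
            rw [show q.pos.val = s - 1 by omega]; exact hω₂s1
          rcases h1 with ⟨hu, hv⟩ | ⟨hv, hu⟩
          · have hu' : u = s' := Fin.val_injective hu
            have hv' : v = q.pos := Fin.val_injective hv
            rw [hu', hv', pathW_eq₂ (show q.pos.val + 1 = s'.val by omega)]
            show ω₂ q.pos.val = q.w s' q.pos
            omega
          · have hv' : v = s' := Fin.val_injective hv
            have hu' : u = q.pos := Fin.val_injective hu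
            rw [hu', hv', pathW_eq₁ (show q.pos.val + 1 = s'.val by omega)]
            show ω₂ q.pos.val = q.w q.pos s'
            rw [q.symm q.pos s']
            omega
        · rw [hω₂, pathW_update (by omega) (by omega), pathW_update (by omega) (by omega)]
          exact (hq u v ⟨by omega, by omega⟩).symm
      · have hωs1 : 0 < ω (s-1) := by
          rw [show s - 1 = q.pos.val by omega]; exact hωt
        have hsum : (∑ i ∈ Finset.range n, ω₂ i) < T :=
          lt_of_lt_of_le (sum_le_sum_update ω (k := s-1) (by omega) hωs1 ω₂ hω₂le hω₂s1) hT
        have hEa : Even (a - 2) := by obtain ⟨r, hr⟩ := hea; exact ⟨r - 1, by omega⟩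
        have hA' : ∀ i < a - 2, 0 < ω₂ (s - 2 - 1 - i) := by
          intro i hi
          have h := hA (i + 2) (by omega)
          rw [show s - 1 - (i + 2) = s - 2 - 1 - i by omega] at h
          rw [hω₂, Function.update_apply, if_neg (by omega), Function.update_apply,
            if_neg (by omega)]
          exact h
        have hA0' : a - 2 = s - 2 ∨ ω₂ (s - 2 - 1 - (a - 2)) = 0 := by
          by_cases has : a = s
          · exact Or.inl (by omega)
          · right
            rw [hω₂, Function.update_apply, if_neg (by omega), Function.update_apply,
              if_neg (by omega)]
            rcases hA0 with h | h
            · exact absurd h has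
            · rw [show s - 1 - a = s - 2 - 1 - (a - 2) by omega] at h
              exact h
        exact IH _ hsum ω₂ (s-2) (by omega) le_rfl (a-2) 0 (by omega) (by omega)
          hEa Even.zero hA' hA0' (by intro i hi; omega) (Or.inr (by simpa using hω₂s2))
    · -- opponent left the edge positive: move back, zeroing the edge
      set ω₁ : ℕ → ℕ := Function.update ω (s-1) 0 with hω₁
      have hω₁le : ∀ i, ω₁ i ≤ ω i := by
        intro i; rw [hω₁, Function.update_apply]; split_ifs <;> omega
      have hω₁s1 : ω₁ (s-1) = 0 := by rw [hω₁, Function.update_apply, if_pos rfl]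
      refine ⟨⟨pathW n ω₁, pathW_symm n ω₁, s'⟩, ⟨?_, ?_, ?_⟩, ?_⟩
      · intro h
        have h' : q.pos.val = s := congrArg Fin.val h
        omega
      · show pathW n ω₁ q.pos s' < q.w q.pos s'
        rw [pathW_eq₁ (show q.pos.val + 1 = s'.val by omega), q.symm q.pos s']
        show ω₁ q.pos.val < q.w s' q.pos
        have h0 : ω₁ q.pos.val = 0 := by
          rw [show q.pos.val = s - 1 by omega]; exact hω₁s1
        omega
      · intro u v huv
        show pathW n ω₁ u v = q.w u v
        have hval : ¬(u.val = q.pos.val ∧ v.val = s) ∧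
            ¬(u.val = s ∧ v.val = q.pos.val) := by
          constructor <;> rintro ⟨h1, h2⟩ <;> apply huv
          · exact Or.inl ⟨Fin.val_injective h1, Fin.val_injective h2⟩
          · exact Or.inr ⟨Fin.val_injective h1, Fin.val_injective h2⟩
        rw [hω₁, pathW_update (by omega) (by omega)]
        exact (hq u v ⟨by omega, by omega⟩).symm
      · have hωs1 : 0 < ω (s-1) := by
          rw [show s - 1 = q.pos.val by omega]; exact hωt
        have hsum : (∑ i ∈ Finset.range n, ω₁ i) < T :=
          lt_of_lt_of_le (sum_le_sum_update ω (k := s-1) (by omega) hωs1 ω₁ hω₁le hω₁s1) hT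
        have hB' : ∀ i < b, 0 < ω₁ (s + i) := by
          intro i hi
          rw [hω₁, Function.update_apply, if_neg (by omega)]
          exact hB i hi
        have hB0' : s + b = n ∨ ω₁ (s + b) = 0 := by
          rcases hB0 with h | h
          · exact Or.inl h
          · right
            rw [hω₁, Function.update_apply, if_neg (by omega)]
            exact h
        exact IH _ hsum ω₁ s hs le_rfl 0 b (by omega) hsb Even.zero heb
          (by intro i hi; omega) (Or.inr (by simpa using hω₁s1)) hB' hB0'

end Aux

/-- Nim on a path with `n` edges and positive weights, piece at
an interior vertex `s` with both subpaths to the endpoints (of lengths `s` and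
`n - s`) even: the position is a 0-position. -/
theorem stmt2 (n : ℕ) (ω : ℕ → ℕ) (hω : ∀ i < n, 0 < ω i) (s : Fin (n+1))
    (hint : 0 < s.val ∧ s.val < n)
    (he1 : Even s.val) (he2 : Even (n - s.val)) :
    MoverLoses ⟨pathW n ω, pathW_symm n ω, s⟩ := by
  have hA : ∀ i < s.val, 0 < ω (s.val - 1 - i) := fun i hi => hω _ (by omega)
  have hB : ∀ i < n - s.val, 0 < ω (s.val + i) := fun i hi => hω _ (by omega)
  exact key_s2 n (∑ i ∈ Finset.range n, ω i) ω s.val (by omega) le_rfl s.val (n - s.val)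
    le_rfl (by omega) he1 he2 hA (Or.inl rfl) hB (Or.inl (by omega))
end

section
/- In Nim on graphs played on a cycle with an odd number of edges, all edges having positive integer weight, the first player has a winning strategy from any starting vertex: the first player wins by reducing either incident edge's weight to zero, leaving the opponent at an endpoint of a path with an even number of edges. -/
lemma mod2 {m : ℕ} (hm : 0 < m) {a : ℕ} (h : a < 2*m) :
    (a < m ∧ a % m = a) ∨ (m ≤ a ∧ a % m = a - m) := by
  rcases lt_or_ge a m with h1 | h1
  · exact Or.inl ⟨h1, Nat.mod_eq_of_lt h1⟩
  · refine Or.inr ⟨h1, ?_⟩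
    rw [Nat.mod_eq_sub_mod h1, Nat.mod_eq_of_lt (by omega)]

lemma addmod_inj {m t : ℕ} (ht : t < m) {i j : ℕ} (hi : i < m) (hj : j < m) :
    ((t+i)%m = (t+j)%m) ↔ i = j := by
  have h1 := mod2 (show 0 < m by omega) (show t+i<2*m by omega)
  have h2 := mod2 (show 0 < m by omega) (show t+j<2*m by omega)
  omega

lemma shift_ne {m t : ℕ} (ht : t < m) {i j : ℕ} (hi : i < m) (hj : j < m)
    (hij : i ≠ j) : (t+i)%m ≠ (t+j)%m :=
  fun hc => hij ((addmod_inj ht hi hj).mp hc)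

lemma shift_ne0 {m t : ℕ} (ht : t < m) {i : ℕ} (hi : i < m) (h0 : i ≠ 0) :
    (t+i)%m ≠ t := by
  have := shift_ne ht hi (show 0 < m by omega) h0
  rwa [Nat.add_zero, Nat.mod_eq_of_lt ht] at this

lemma cycW_fwd (m : ℕ) (hm : 3 ≤ m) (ω : ℕ → ℕ) (u v : Fin m)
    (h : (u.val + 1) % m = v.val) : cycW m ω u v = ω u.val := by
  have hu := u.isLt; have hv := v.isLt
  have h2 : ¬ ((v.val + 1) % m = u.val) := by
    intro hb
    have e1 := mod2 (show 0 < m by omega) (show u.val+1 < 2*m by omega)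
    have e2 := mod2 (show 0 < m by omega) (show v.val+1 < 2*m by omega)
    omega
  unfold cycW
  rw [if_pos h, if_neg h2]
  omega

lemma cycW_bwd (m : ℕ) (hm : 3 ≤ m) (ω : ℕ → ℕ) (u v : Fin m)
    (h : (v.val + 1) % m = u.val) : cycW m ω u v = ω v.val := by
  rw [cycW_symm]; exact cycW_fwd m hm ω v u h

lemma cycW_pos (m : ℕ) (ω : ℕ → ℕ) (u v : Fin m)
    (h : 0 < cycW m ω u v) : (u.val+1)%m = v.val ∨ (v.val+1)%m = u.val := by
  by_contra hc
  push_neg at hc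
  unfold cycW at h
  rw [if_neg hc.1, if_neg hc.2] at h
  omega

lemma cycW_upd (m : ℕ) (ω : ℕ → ℕ) (e a : ℕ) (u v : Fin m)
    (h1 : (u.val+1)%m = v.val → u.val ≠ e)
    (h2 : (v.val+1)%m = u.val → v.val ≠ e) :
    cycW m (Function.update ω e a) u v = cycW m ω u v := by
  unfold cycW
  have e1 : (if (u.val+1)%m = v.val then Function.update ω e a u.val else 0)
      = (if (u.val+1)%m = v.val then ω u.val else 0) := by
    split_ifs with hA
    · rw [Function.update_apply, if_neg (h1 hA)]
    · rfl
  have e2 : (if (v.val+1)%m = u.val then Function.update ω e a v.val else 0)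
      = (if (v.val+1)%m = u.val then ω v.val else 0) := by
    split_ifs with hA
    · rw [Function.update_apply, if_neg (h2 hA)]
    · rfl
  rw [e1, e2]

lemma sum_upd {m : ℕ} (e a : ℕ) (he : e < m) (ω : ℕ → ℕ) :
    (∑ i ∈ Finset.range m, Function.update ω e a i) + ω e
      = (∑ i ∈ Finset.range m, ω i) + a := by
  rw [Finset.sum_update_of_mem (Finset.mem_range.mpr he), ← Finset.erase_eq,
      ← Finset.add_sum_erase _ ω (Finset.mem_range.mpr he)]
  omega

lemma move_char (m : ℕ) (hm : 3 ≤ m) (ω : ℕ → ℕ) (t : Fin m) (q : NimPos (Fin m))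
    (h : NimMove ⟨cycW m ω, cycW_symm m ω, t⟩ q) :
    (q.pos.val = (t.val+1)%m ∧ q.w t q.pos < ω t.val ∧
       q.w = cycW m (Function.update ω t.val (q.w t q.pos))) ∨
    (q.pos.val = (t.val+(m-1))%m ∧ q.w t q.pos < ω q.pos.val ∧
       q.w = cycW m (Function.update ω q.pos.val (q.w t q.pos))) := by
  obtain ⟨hne, hlt, hframe⟩ := h
  dsimp only at hne hlt hframe
  have hpos : 0 < cycW m ω t q.pos := by omega
  have ht := t.isLt; have hq := q.pos.isLt
  rcases cycW_pos m ω t q.pos hpos with hf | hb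
  · left
    refine ⟨hf.symm, ?_, ?_⟩
    · rwa [cycW_fwd m hm ω t q.pos hf] at hlt
    · funext u v
      by_cases hp : (u = t ∧ v = q.pos) ∨ (u = q.pos ∧ v = t)
      · rcases hp with ⟨hu, hv⟩ | ⟨hu, hv⟩
        · rw [hu, hv, cycW_fwd m hm _ t q.pos hf, Function.update_self]
        · rw [hu, hv, cycW_bwd m hm _ q.pos t hf, Function.update_self, q.symm]
      · rw [hframe u v hp]
        refine (cycW_upd m ω t.val _ u v ?_ ?_).symm
        · intro hA hE
          have hu : u = t := Fin.val_injective hE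
          have hv : v = q.pos := Fin.val_injective (by rw [← hA, hu, hf])
          exact hp (Or.inl ⟨hu, hv⟩)
        · intro hA hE
          have hv : v = t := Fin.val_injective hE
          have hu : u = q.pos := Fin.val_injective (by rw [← hA, hv, hf])
          exact hp (Or.inr ⟨hu, hv⟩)
  · right
    have hqv : q.pos.val = (t.val+(m-1))%m := by
      have e1 := mod2 (show 0 < m by omega) (show q.pos.val+1 < 2*m by omega)
      have e2 := mod2 (show 0 < m by omega) (show t.val+(m-1) < 2*m by omega)
      omega
    refine ⟨hqv, ?_, ?_⟩
    · rwa [cycW_bwd m hm ω t q.pos hb] at hlt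
    · funext u v
      by_cases hp : (u = t ∧ v = q.pos) ∨ (u = q.pos ∧ v = t)
      · rcases hp with ⟨hu, hv⟩ | ⟨hu, hv⟩
        · rw [hu, hv, cycW_bwd m hm _ t q.pos hb, Function.update_self]
        · rw [hu, hv, cycW_fwd m hm _ q.pos t hb, Function.update_self, q.symm]
      · rw [hframe u v hp]
        refine (cycW_upd m ω q.pos.val _ u v ?_ ?_).symm
        · intro hA hE
          have hu : u = q.pos := Fin.val_injective hE
          have hv : v = t := Fin.val_injective (by rw [← hA, hu, hb])
          exact hp (Or.inr ⟨hu, hv⟩)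
        · intro hA hE
          have hv : v = q.pos := Fin.val_injective hE
          have hu : u = t := Fin.val_injective (by rw [← hA, hv, hb])
          exact hp (Or.inl ⟨hu, hv⟩)

lemma nomove_of_dead (m : ℕ) (hm : 3 ≤ m) (ω : ℕ → ℕ) (t : Fin m)
    (hf : ω t.val = 0) (hb : ω ((t.val + (m-1)) % m) = 0) :
    MoverLoses ⟨cycW m ω, cycW_symm m ω, t⟩ := by
  have nomove : ∀ q, ¬ NimMove ⟨cycW m ω, cycW_symm m ω, t⟩ q := by
    intro q hq
    rcases move_char m hm ω t q hq with ⟨_, hlt, _⟩ | ⟨hqv, hlt, _⟩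
    · omega
    · rw [hqv] at hlt; omega
  exact MoverLoses.intro _ (fun q _ => q) (fun q h => absurd h (nomove q))
    (fun q h => absurd h (nomove q))

lemma endLoseF (m : ℕ) (hm : 3 ≤ m) :
    ∀ (N : ℕ) (ω : ℕ → ℕ) (t : Fin m) (k : ℕ),
      (∑ i ∈ Finset.range m, ω i) ≤ N →
      Even k →
      (∀ i < k, 0 < ω ((t.val + i) % m)) →
      ω ((t.val + k) % m) = 0 →
      ω ((t.val + (m-1)) % m) = 0 →
      MoverLoses ⟨cycW m ω, cycW_symm m ω, t⟩ := by
  intro N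
  induction N with
  | zero =>
    intro ω t k hsum hke hrun hstop hback
    have hz : ∀ i ∈ Finset.range m, ω i = 0 :=
      (Finset.sum_eq_zero_iff).mp (by omega)
    exact nomove_of_dead m hm ω t (hz t.val (Finset.mem_range.mpr t.isLt)) hback
  | succ N ih =>
    intro ω t k hsum hke hrun hstop hback
    have ht := t.isLt
    have ht0 : (t.val + 0) % m = t.val := by
      rw [Nat.add_zero, Nat.mod_eq_of_lt ht]
    rcases Nat.eq_zero_or_pos k with hk0 | hkpos
    · subst hk0
      rw [ht0] at hstop
      exact nomove_of_dead m hm ω t hstop hback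
    have hk2 : 2 ≤ k := by
      rcases hke with ⟨j, hj⟩; omega
    have hkm : k ≤ m - 1 := by
      by_contra hc
      have := hrun (m-1) (by omega)
      omega
    have hωt : 0 < ω t.val := by have := hrun 0 (by omega); rwa [ht0] at this
    -- key vertices
    set t1 : Fin m := ⟨(t.val+1)%m, Nat.mod_lt _ (by omega)⟩ with ht1
    set t2 : Fin m := ⟨(t.val+2)%m, Nat.mod_lt _ (by omega)⟩ with ht2
    have h10 : t1.val ≠ t.val := shift_ne0 ht (by omega) (by omega)
    have h21 : t2.val ≠ t1.val :=
      shift_ne ht (show 2 < m by omega) (show 1 < m by omega) (by omega)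
    have h20 : t2.val ≠ t.val := shift_ne0 ht (by omega) (by omega)
    refine MoverLoses.intro _
      (fun q _ => if q.w t q.pos = 0
        then ⟨cycW m (Function.update (Function.update ω t.val 0) t1.val 0),
              cycW_symm _ _, t2⟩
        else ⟨cycW m (Function.update ω t.val 0), cycW_symm _ _, t⟩) ?_ ?_
    · -- hmove
      intro q h
      rcases move_char m hm ω t q h with ⟨hqp, hlt, hqw⟩ | ⟨hqv, hlt, _⟩
      swap
      · rw [hqv] at hlt; omega
      have hqpos : q.pos = t1 := Fin.val_injective (by rw [hqp])
      by_cases ha : q.w t q.pos = 0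
      · rw [if_pos ha]
        rw [ha] at hqw
        have hω1 : 0 < Function.update ω t.val 0 t1.val := by
          rw [Function.update_apply, if_neg h10]
          exact hrun 1 (by omega)
        refine ⟨?_, ?_, ?_⟩
        · dsimp only; rw [hqpos]; intro hc
          exact h21 (congrArg Fin.val hc).symm
        · dsimp only
          rw [hqpos, hqw]
          have hadj : (t1.val + 1) % m = t2.val := by
            show ((t.val+1)%m + 1) % m = (t.val+2)%m
            rw [Nat.mod_add_mod]
          rw [cycW_fwd m hm _ t1 t2 hadj, cycW_fwd m hm _ t1 t2 hadj,
            Function.update_self]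
          exact hω1
        · intro u v hp
          dsimp only at hp ⊢
          rw [hqw]
          refine cycW_upd m _ t1.val 0 u v ?_ ?_
          · intro hA hE
            have hu : u = t1 := Fin.val_injective hE
            have hv : v = t2 := Fin.val_injective (by
              rw [← hA, hE]
              show (t1.val + 1) % m = t2.val
              show ((t.val+1)%m + 1) % m = (t.val+2)%m
              rw [Nat.mod_add_mod])
            exact hp (Or.inl ⟨by rw [hu, hqpos], hv⟩)
          · intro hA hE
            have hv : v = t1 := Fin.val_injective hE
            have hu : u = t2 := Fin.val_injective (by
              rw [← hA, hE]
              show (t1.val + 1) % m = t2.val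
              show ((t.val+1)%m + 1) % m = (t.val+2)%m
              rw [Nat.mod_add_mod])
            exact hp (Or.inr ⟨hu, by rw [hv, hqpos]⟩)
      · rw [if_neg ha]
        refine ⟨?_, ?_, ?_⟩
        · dsimp only; rw [hqpos]; intro hc
          exact h10 (congrArg Fin.val hc)
        · dsimp only
          rw [hqpos, hqw]
          have hadj : (t.val + 1) % m = t1.val := rfl
          rw [cycW_bwd m hm _ t1 t hadj, cycW_bwd m hm _ t1 t hadj,
            Function.update_self, Function.update_self]
          omega
        · intro u v hp
          dsimp only at hp ⊢
          rw [hqw, ← Function.update_idem (a := t.val) (q.w t q.pos) 0 ω]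
          refine cycW_upd m _ t.val 0 u v ?_ ?_
          · intro hA hE
            have hu : u = t := Fin.val_injective hE
            have hv : v = t1 := Fin.val_injective (by rw [← hA, hE])
            exact hp (Or.inr ⟨by rw [hu], by rw [hv, hqpos]⟩)
          · intro hA hE
            have hv : v = t := Fin.val_injective hE
            have hu : u = t1 := Fin.val_injective (by rw [← hA, hE])
            exact hp (Or.inl ⟨by rw [hu, hqpos], by rw [hv]⟩)
    · -- hwin
      intro q h
      rcases move_char m hm ω t q h with ⟨hqp, hlt, hqw⟩ | ⟨hqv, hlt, _⟩
      swap
      · rw [hqv] at hlt; omega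
      have hs1 := sum_upd t.val 0 ht ω
      by_cases ha : q.w t q.pos = 0
      · rw [if_pos ha]
        have hs2 := sum_upd t1.val 0 t1.isLt (Function.update ω t.val 0)
        have hω1 : Function.update ω t.val 0 t1.val = ω t1.val := by
          rw [Function.update_apply, if_neg h10]
        have hrun1 : 0 < ω t1.val := hrun 1 (by omega)
        refine ih (Function.update (Function.update ω t.val 0) t1.val 0) t2 (k-2)
          (by omega) ?_ ?_ ?_ ?_
        · rcases hke with ⟨j, hj⟩; exact ⟨j-1, by omega⟩
        · intro i hi
          have hidx : (t2.val + i) % m = (t.val + (i+2)) % m := by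
            show ((t.val+2)%m + i) % m = (t.val + (i+2)) % m
            rw [Nat.mod_add_mod]
            congr 1; omega
          rw [hidx, Function.update_apply, Function.update_apply]
          have hi2 : i + 2 < m := by omega
          rw [if_neg (shift_ne ht hi2 (show 1 < m by omega) (by omega)),
             if_neg (shift_ne0 ht hi2 (by omega))]
          exact hrun (i+2) (by omega)
        · have hidx : (t2.val + (k-2)) % m = (t.val + k) % m := by
            show ((t.val+2)%m + (k-2)) % m = (t.val + k) % m
            rw [Nat.mod_add_mod]
            congr 1; omega
          rw [hidx, Function.update_apply, Function.update_apply]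
          have hkm' : k < m := by omega
          rw [if_neg (shift_ne ht hkm' (show 1 < m by omega) (by omega)),
             if_neg (shift_ne0 ht hkm' (by omega))]
          exact hstop
        · have hidx : (t2.val + (m-1)) % m = t1.val := by
            show ((t.val+2)%m + (m-1)) % m = (t.val+1)%m
            rw [Nat.mod_add_mod]
            have : t.val + 2 + (m-1) = (t.val + 1) + m := by omega
            rw [this, Nat.add_mod_right]
          rw [hidx, Function.update_self]
      · rw [if_neg ha]
        have hb1 : (t.val + (m-1)) % m ≠ t.val :=
          shift_ne0 ht (by omega) (by omega)
        refine ih (Function.update ω t.val 0) t 0 (by omega) Even.zero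
          (by intro i hi; omega) ?_ ?_
        · rw [ht0, Function.update_self]
        · rw [Function.update_apply, if_neg hb1]
          exact hback

lemma endLoseB (m : ℕ) (hm : 3 ≤ m) :
    ∀ (N : ℕ) (ω : ℕ → ℕ) (t : Fin m) (k : ℕ),
      (∑ i ∈ Finset.range m, ω i) ≤ N →
      Even k →
      (∀ i < k, 0 < ω ((t.val + (m-1-i)) % m)) →
      ω ((t.val + (m-1-k)) % m) = 0 →
      ω t.val = 0 →
      MoverLoses ⟨cycW m ω, cycW_symm m ω, t⟩ := by
  intro N
  induction N with
  | zero =>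
    intro ω t k hsum hke hrun hstop hfwd
    have hz : ∀ i ∈ Finset.range m, ω i = 0 :=
      (Finset.sum_eq_zero_iff).mp (by omega)
    exact nomove_of_dead m hm ω t hfwd
      (hz _ (Finset.mem_range.mpr (Nat.mod_lt _ (by omega))))
  | succ N ih =>
    intro ω t k hsum hke hrun hstop hfwd
    have ht := t.isLt
    have ht0 : (t.val + 0) % m = t.val := by
      rw [Nat.add_zero, Nat.mod_eq_of_lt ht]
    rcases Nat.eq_zero_or_pos k with hk0 | hkpos
    · subst hk0
      exact nomove_of_dead m hm ω t hfwd hstop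
    have hk2 : 2 ≤ k := by rcases hke with ⟨j, hj⟩; omega
    have hkm : k ≤ m - 1 := by
      by_contra hc
      have := hrun (m-1) (by omega)
      rw [show m-1-(m-1) = 0 from by omega, ht0] at this
      omega
    have hωb1 : 0 < ω ((t.val + (m-1)) % m) := by
      have := hrun 0 (by omega)
      rwa [show m-1-0 = m-1 from rfl] at this
    have hωb2 : 0 < ω ((t.val + (m-2)) % m) := by
      have := hrun 1 (by omega)
      rwa [show m-1-1 = m-2 from by omega] at this
    set b1 : Fin m := ⟨(t.val+(m-1))%m, Nat.mod_lt _ (by omega)⟩ with hb1def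
    set b2 : Fin m := ⟨(t.val+(m-2))%m, Nat.mod_lt _ (by omega)⟩ with hb2def
    have hωb1' : 0 < ω b1.val := hωb1
    have hωb2' : 0 < ω b2.val := hωb2
    have h10 : b1.val ≠ t.val := shift_ne0 ht (by omega) (by omega)
    have h21 : b2.val ≠ b1.val :=
      shift_ne ht (show m-2 < m by omega) (show m-1 < m by omega) (by omega)
    have h20 : b2.val ≠ t.val := shift_ne0 ht (by omega) (by omega)
    have hadj1 : (b1.val + 1) % m = t.val := by
      show ((t.val+(m-1))%m + 1) % m = t.val
      rw [Nat.mod_add_mod, show t.val+(m-1)+1 = t.val + m from by omega,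
        Nat.add_mod_right, Nat.mod_eq_of_lt ht]
    have hadj2 : (b2.val + 1) % m = b1.val := by
      show ((t.val+(m-2))%m + 1) % m = (t.val+(m-1))%m
      rw [Nat.mod_add_mod]
      congr 1; omega
    refine MoverLoses.intro _
      (fun q _ => if q.w t q.pos = 0
        then ⟨cycW m (Function.update (Function.update ω b1.val 0) b2.val 0),
              cycW_symm _ _, b2⟩
        else ⟨cycW m (Function.update ω b1.val 0), cycW_symm _ _, t⟩) ?_ ?_
    · -- hmove
      intro q h
      rcases move_char m hm ω t q h with ⟨_, hlt, _⟩ | ⟨hqv, hlt, hqw⟩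
      · omega
      have hqpos : q.pos = b1 := Fin.val_injective (by rw [hqv])
      have hqw' : q.w = cycW m (Function.update ω b1.val (q.w t q.pos)) :=
        hqw.trans (by rw [hqv])
      by_cases ha : q.w t q.pos = 0
      · rw [if_pos ha]
        refine ⟨?_, ?_, ?_⟩
        · dsimp only; rw [hqpos]; intro hc
          exact h21 (congrArg Fin.val hc).symm
        · dsimp only
          rw [hqpos, hqw', ha]
          rw [cycW_bwd m hm _ b1 b2 hadj2, cycW_bwd m hm _ b1 b2 hadj2,
            Function.update_self, Function.update_apply, if_neg h21]
          exact hωb2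
        · intro u v hp
          dsimp only at hp ⊢
          rw [hqpos] at hp
          rw [hqw', ha]
          refine cycW_upd m _ b2.val 0 u v ?_ ?_
          · intro hA hE
            have hu : u = b2 := Fin.val_injective hE
            have hv : v = b1 := Fin.val_injective (by rw [← hA, hE, hadj2])
            exact hp (Or.inr ⟨hu, hv⟩)
          · intro hA hE
            have hv : v = b2 := Fin.val_injective hE
            have hu : u = b1 := Fin.val_injective (by rw [← hA, hE, hadj2])
            exact hp (Or.inl ⟨hu, hv⟩)
      · rw [if_neg ha]
        refine ⟨?_, ?_, ?_⟩
        · dsimp only; rw [hqpos]; intro hc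
          exact h10 (congrArg Fin.val hc)
        · dsimp only
          rw [hqpos, hqw']
          rw [cycW_fwd m hm _ b1 t hadj1, cycW_fwd m hm _ b1 t hadj1,
            Function.update_self, Function.update_self]
          omega
        · intro u v hp
          dsimp only at hp ⊢
          rw [hqpos] at hp
          rw [hqw', ← Function.update_idem (a := b1.val) (q.w t q.pos) 0 ω]
          refine cycW_upd m _ b1.val 0 u v ?_ ?_
          · intro hA hE
            have hu : u = b1 := Fin.val_injective hE
            have hv : v = t := Fin.val_injective (by rw [← hA, hE, hadj1])
            exact hp (Or.inl ⟨hu, hv⟩)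
          · intro hA hE
            have hv : v = b1 := Fin.val_injective hE
            have hu : u = t := Fin.val_injective (by rw [← hA, hE, hadj1])
            exact hp (Or.inr ⟨hu, hv⟩)
    · -- hwin
      intro q h
      rcases move_char m hm ω t q h with ⟨_, hlt, _⟩ | ⟨hqv, hlt, hqw⟩
      · omega
      have hs1 := sum_upd b1.val 0 b1.isLt ω
      by_cases ha : q.w t q.pos = 0
      · rw [if_pos ha]
        have hs2 := sum_upd b2.val 0 b2.isLt (Function.update ω b1.val 0)
        have hω1 : Function.update ω b1.val 0 b2.val = ω b2.val := by
          rw [Function.update_apply, if_neg h21]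
        refine ih (Function.update (Function.update ω b1.val 0) b2.val 0) b2 (k-2)
          (by omega) ?_ ?_ ?_ ?_
        · rcases hke with ⟨j, hj⟩; exact ⟨j-1, by omega⟩
        · intro i hi
          have hidx : (b2.val + (m-1-i)) % m = (t.val + (m-1-(i+2))) % m := by
            show ((t.val+(m-2))%m + (m-1-i)) % m = _
            rw [Nat.mod_add_mod,
              show t.val+(m-2)+(m-1-i) = (t.val + (m-1-(i+2))) + m from by omega,
              Nat.add_mod_right]
          rw [hidx, Function.update_apply, Function.update_apply]
          rw [if_neg (shift_ne ht (show m-1-(i+2) < m by omega)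
                (show m-2 < m by omega) (by omega)),
             if_neg (shift_ne ht (show m-1-(i+2) < m by omega)
                (show m-1 < m by omega) (by omega))]
          exact hrun (i+2) (by omega)
        · have hidx : (b2.val + (m-1-(k-2))) % m = (t.val + (m-1-k)) % m := by
            show ((t.val+(m-2))%m + (m-1-(k-2))) % m = _
            rw [Nat.mod_add_mod,
              show t.val+(m-2)+(m-1-(k-2)) = (t.val + (m-1-k)) + m from by omega,
              Nat.add_mod_right]
          rw [hidx, Function.update_apply, Function.update_apply]
          rw [if_neg (shift_ne ht (show m-1-k < m by omega)
                (show m-2 < m by omega) (by omega)),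
             if_neg (shift_ne ht (show m-1-k < m by omega)
                (show m-1 < m by omega) (by omega))]
          exact hstop
        · exact Function.update_self _ _ _
      · rw [if_neg ha]
        refine ih (Function.update ω b1.val 0) t 0 (by omega) Even.zero
          (by intro i hi; omega) ?_ ?_
        · show Function.update ω b1.val 0 ((t.val + (m-1-0)) % m) = 0
          rw [show m-1-0 = m-1 from rfl]
          exact Function.update_self _ _ _
        · rw [Function.update_apply, if_neg (Ne.symm h10)]
          exact hfwd

/-- Nim on a cycle with an odd number `m` of edges, all weights
positive: from any starting vertex the first player wins, and indeed any first
move reducing the crossed incident edge to weight zero (leaving the opponent at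
the endpoint of an even path) is a winning move. -/
theorem stmt3 (m : ℕ) (hm : 3 ≤ m) (hodd : Odd m) (ω : ℕ → ℕ)
    (hω : ∀ i < m, 0 < ω i) (s : Fin m) :
    MoverWins ⟨cycW m ω, cycW_symm m ω, s⟩ ∧
    ∀ q, NimMove ⟨cycW m ω, cycW_symm m ω, s⟩ q → q.w s q.pos = 0 →
      MoverLoses q := by
  have hs := s.isLt
  have hEm1 : Even (m-1) := by rcases hodd with ⟨j, hj⟩; exact ⟨j, by omega⟩
  have part2 : ∀ q, NimMove ⟨cycW m ω, cycW_symm m ω, s⟩ q → q.w s q.pos = 0 →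
      MoverLoses q := by
    intro q hq hz
    rcases move_char m hm ω s q hq with ⟨hqp, hlt, hqw⟩ | ⟨hqv, hlt, hqw⟩
    · -- forward move
      rw [hz] at hqw
      obtain ⟨qw, qsym, qpos⟩ := q
      dsimp only at hqp hqw ⊢
      subst hqw
      have hq1 : qpos = (⟨(s.val+1)%m, Nat.mod_lt _ (by omega)⟩ : Fin m) :=
        Fin.val_injective hqp
      rw [hq1]
      refine endLoseF m hm _ (Function.update ω s.val 0)
        ⟨(s.val+1)%m, Nat.mod_lt _ (by omega)⟩ (m-1) le_rfl hEm1 ?_ ?_ ?_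
      · intro i hi
        show 0 < Function.update ω s.val 0 (((s.val+1)%m + i) % m)
        have hidx : ((s.val+1)%m + i) % m = (s.val + (1+i)) % m := by
          rw [Nat.mod_add_mod]; congr 1; omega
        rw [hidx, Function.update_apply,
          if_neg (shift_ne0 hs (show 1+i < m by omega) (by omega))]
        exact hω _ (Nat.mod_lt _ (by omega))
      · show Function.update ω s.val 0 (((s.val+1)%m + (m-1)) % m) = 0
        have hidx : ((s.val+1)%m + (m-1)) % m = s.val := by
          rw [Nat.mod_add_mod, show s.val+1+(m-1) = s.val + m from by omega,
            Nat.add_mod_right, Nat.mod_eq_of_lt hs]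
        rw [hidx]
        exact Function.update_self _ _ _
      · show Function.update ω s.val 0 (((s.val+1)%m + (m-1)) % m) = 0
        have hidx : ((s.val+1)%m + (m-1)) % m = s.val := by
          rw [Nat.mod_add_mod, show s.val+1+(m-1) = s.val + m from by omega,
            Nat.add_mod_right, Nat.mod_eq_of_lt hs]
        rw [hidx]
        exact Function.update_self _ _ _
    · -- backward move
      rw [hz] at hqw
      obtain ⟨qw, qsym, qpos⟩ := q
      dsimp only at hqv hqw ⊢
      subst hqw
      have hqlt := qpos.isLt
      refine endLoseB m hm _ (Function.update ω qpos.val 0) qpos (m-1)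
        le_rfl hEm1 ?_ ?_ ?_
      · intro i hi
        have hidx : (qpos.val + (m-1-i)) % m = (s.val + (m-2-i)) % m := by
          rw [hqv, Nat.mod_add_mod,
            show s.val+(m-1)+(m-1-i) = (s.val + (m-2-i)) + m from by omega,
            Nat.add_mod_right]
        rw [hidx, Function.update_apply, hqv,
          if_neg (shift_ne hs (show m-2-i < m by omega) (show m-1 < m by omega)
            (by omega))]
        exact hω _ (Nat.mod_lt _ (by omega))
      · have hidx : (qpos.val + (m-1-(m-1))) % m = qpos.val := by
          rw [show m-1-(m-1) = 0 from by omega, Nat.add_zero,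
            Nat.mod_eq_of_lt hqlt]
        rw [hidx]
        exact Function.update_self _ _ _
      · exact Function.update_self _ _ _
  refine ⟨?_, part2⟩
  have hadj : (s.val + 1) % m = ((⟨(s.val+1)%m, Nat.mod_lt _ (by omega)⟩ : Fin m)).val := rfl
  set t1 : Fin m := ⟨(s.val+1)%m, Nat.mod_lt _ (by omega)⟩ with ht1
  have hmove0 : NimMove ⟨cycW m ω, cycW_symm m ω, s⟩
      ⟨cycW m (Function.update ω s.val 0), cycW_symm _ _, t1⟩ := by
    refine ⟨?_, ?_, ?_⟩
    · dsimp only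
      intro hc
      exact shift_ne0 hs (show 1 < m by omega) (by omega) (congrArg Fin.val hc).symm
    · dsimp only
      rw [cycW_fwd m hm _ s t1 hadj, cycW_fwd m hm _ s t1 hadj, Function.update_self]
      exact hω _ hs
    · intro u v hp
      dsimp only at hp ⊢
      refine cycW_upd m _ s.val 0 u v ?_ ?_
      · intro hA hE
        have hu : u = s := Fin.val_injective hE
        have hv : v = t1 := Fin.val_injective (by rw [← hA, hE, hadj])
        exact hp (Or.inl ⟨hu, hv⟩)
      · intro hA hE
        have hv : v = s := Fin.val_injective hE
        have hu : u = t1 := Fin.val_injective (by rw [← hA, hE, hadj])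
        exact hp (Or.inr ⟨hu, hv⟩)
  have h0 : (cycW m (Function.update ω s.val 0)) s t1 = 0 := by
    rw [cycW_fwd m hm _ s t1 hadj]
    exact Function.update_self _ _ _
  exact ⟨_, hmove0, part2 _ hmove0 h0⟩
end

section
/- In Nim on graphs played on an even cycle C_{2n} in which every edge has the same weight k ≥ 1, the second player has a winning strategy from any starting vertex. -/
namespace Stmt4Aux

/-- vertex of `Fin m` with index `s` mod `m`. -/
def eV (m s : ℕ) (hm : 0 < m := by omega) : Fin m := ⟨s % m, Nat.mod_lt _ hm⟩

lemma eV_val {m : ℕ} (hm : 0 < m) (s : ℕ) : (eV m s).val = s % m := rfl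

lemma mod_inj {m : ℕ} (s x y : ℕ) (hx : x < m) (hy : y < m) :
    (s + x) % m = (s + y) % m ↔ x = y := by
  constructor
  · intro h
    have h2 : x ≡ y [MOD m] := Nat.ModEq.add_left_cancel' s h
    rwa [Nat.ModEq, Nat.mod_eq_of_lt hx, Nat.mod_eq_of_lt hy] at h2
  · rintro rfl; rfl

lemma eV_eq_iff {m : ℕ} (hm : 0 < m) (s t : ℕ) : eV m s = eV m t ↔ s % m = t % m := by
  simp [eV, Fin.ext_iff]

/-- evaluate a cycle weight on an edge. -/
lemma cycW_eval {m : ℕ} (hm : 3 ≤ m) (ω : ℕ → ℕ) (s : ℕ) :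
    cycW m ω (eV m s) (eV m (s+1)) = ω (s % m) := by
  have hm0 : 0 < m := by omega
  have hc1 : ((eV m s (by omega)).val + 1) % m = (eV m (s+1) (by omega)).val := by
    rw [eV_val hm0, eV_val hm0, Nat.mod_add_mod]
  have hc2 : ¬ (((eV m (s+1) (by omega)).val + 1) % m = (eV m s (by omega)).val) := by
    rw [eV_val hm0, eV_val hm0, Nat.mod_add_mod]
    intro h
    have h' : (s + 2) % m = (s + 0) % m := by
      have e1 : s + 1 + 1 = s + 2 := by omega
      have e2 : s + 0 = s := by omega
      rw [e2]; rw [e1] at h; exact h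
    have := (mod_inj s 2 0 (by omega) (by omega)).mp h'
    omega
  unfold cycW
  rw [if_pos hc1, if_neg hc2, eV_val hm0, Nat.add_zero]

/-- cycle weight unchanged at pairs away from an updated edge. -/
lemma cycW_update_eq {m : ℕ} (hm : 3 ≤ m) (ω : ℕ → ℕ) (e a : ℕ) (u v : Fin m)
    (h : ¬((u = eV m e (by omega) ∧ v = eV m (e+1) (by omega)) ∨
           (v = eV m e (by omega) ∧ u = eV m (e+1) (by omega)))) :
    cycW m (Function.update ω (e % m) a) u v = cycW m ω u v := by
  have hm0 : 0 < m := by omega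
  push_neg at h
  obtain ⟨h1, h2⟩ := h
  unfold cycW
  have t1 : (if (u.val + 1) % m = v.val then Function.update ω (e % m) a u.val else 0)
      = (if (u.val + 1) % m = v.val then ω u.val else 0) := by
    split_ifs with hc
    · rcases eq_or_ne u.val (e % m) with he | he
      · exfalso
        have hu : u = eV m e := Fin.ext he
        have hv : v = eV m (e+1) := by
          apply Fin.ext
          rw [eV_val hm0, ← hc, he, Nat.mod_add_mod]
        exact h1 hu hv
      · rw [Function.update_of_ne he]
    · rfl
  have t2 : (if (v.val + 1) % m = u.val then Function.update ω (e % m) a v.val else 0)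
      = (if (v.val + 1) % m = u.val then ω v.val else 0) := by
    split_ifs with hc
    · rcases eq_or_ne v.val (e % m) with he | he
      · exfalso
        have hv : v = eV m e := Fin.ext he
        have hu : u = eV m (e+1) := by
          apply Fin.ext
          rw [eV_val hm0, ← hc, he, Nat.mod_add_mod]
        exact h2 hv hu
      · rw [Function.update_of_ne he]
    · rfl
  rw [t1, t2]

/-- all edges pair up into adjacent equal positive pairs aligned with the piece. -/
def Pf (n : ℕ) (ω : ℕ → ℕ) (s : ℕ) : Prop :=
  ∀ i < n, ω ((s + 2*i) % (2*n)) = ω ((s + (2*i+1)) % (2*n)) ∧ 0 < ω ((s + 2*i) % (2*n))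

/-- backward incident edge is zero and the forward positive run is even. -/
def PbF (m : ℕ) (ω : ℕ → ℕ) (s : ℕ) : Prop :=
  ω ((s + (m-1)) % m) = 0 ∧
    ∃ d, Even d ∧ d < m ∧ (∀ i < d, 0 < ω ((s + i) % m)) ∧ ω ((s + d) % m) = 0

/-- forward incident edge is zero and the backward positive run is even. -/
def PbB (m : ℕ) (ω : ℕ → ℕ) (s : ℕ) : Prop :=
  ω (s % m) = 0 ∧
    ∃ d, Even d ∧ d < m ∧ (∀ i < d, 0 < ω ((s + (m-1-i)) % m)) ∧
      ω ((s + (m-1-d)) % m) = 0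

/-- the invariant maintained by the second player. -/
def Good (n : ℕ) (p : NimPos (Fin (2*n))) : Prop :=
  ∃ ω : ℕ → ℕ, (∀ u v, p.w u v = cycW (2*n) ω u v) ∧
    (Pf n ω p.pos.val ∨ PbF (2*n) ω p.pos.val ∨ PbB (2*n) ω p.pos.val)

lemma Pf.pos {n : ℕ} {ω : ℕ → ℕ} {s : ℕ} (h : Pf n ω s) :
    ∀ c < 2*n, 0 < ω ((s + c) % (2*n)) := by
  intro c hc
  obtain ⟨h1, h2⟩ := h (c/2) (by omega)
  rcases (by omega : c = 2*(c/2) ∨ c = 2*(c/2)+1) with hcc | hcc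
  · have : s + c = s + 2*(c/2) := by omega
    rw [this]; exact h2
  · have : s + c = s + (2*(c/2)+1) := by omega
    rw [this, ← h1]; exact h2

/-- a legal forward move of the responder, with explicit cycle data. -/
lemma step_fwd {m : ℕ} (hm : 3 ≤ m) (q : NimPos (Fin m)) (ω' : ℕ → ℕ)
    (hq : ∀ u v, q.w u v = cycW m ω' u v) (e : ℕ)
    (hqe : q.pos = eV m e (by omega)) (b : ℕ) (hb : b < ω' (e % m)) :
    NimMove q ⟨cycW m (Function.update ω' (e % m) b),
      cycW_symm m (Function.update ω' (e % m) b), eV m (e+1) (by omega)⟩ := by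
  have hm0 : 0 < m := by omega
  refine ⟨?_, ?_, ?_⟩
  · rw [hqe]
    intro hcon
    rw [eV_eq_iff hm0] at hcon
    have h' : (e + 0) % m = (e + 1) % m := by rw [Nat.add_zero]; exact hcon
    have := (mod_inj e 0 1 (by omega) (by omega)).mp h'
    omega
  · show cycW m (Function.update ω' (e % m) b) q.pos _ < q.w q.pos _
    rw [hqe, hq, cycW_eval hm ω' e, cycW_eval hm (Function.update ω' (e % m) b) e,
      Function.update_self]
    exact hb
  · intro u v huv
    show cycW m (Function.update ω' (e % m) b) u v = q.w u v
    rw [hq, cycW_update_eq hm]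
    rw [hqe] at huv
    tauto

/-- a legal backward move of the responder, with explicit cycle data. -/
lemma step_bwd {m : ℕ} (hm : 3 ≤ m) (q : NimPos (Fin m)) (ω' : ℕ → ℕ)
    (hq : ∀ u v, q.w u v = cycW m ω' u v) (e : ℕ)
    (hqe : q.pos = eV m (e+1) (by omega)) (b : ℕ) (hb : b < ω' (e % m)) :
    NimMove q ⟨cycW m (Function.update ω' (e % m) b),
      cycW_symm m (Function.update ω' (e % m) b), eV m e (by omega)⟩ := by
  have hm0 : 0 < m := by omega
  refine ⟨?_, ?_, ?_⟩
  · rw [hqe]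
    intro hcon
    rw [eV_eq_iff hm0] at hcon
    have h' : (e + 1) % m = (e + 0) % m := by rw [Nat.add_zero]; exact hcon
    have := (mod_inj e 1 0 (by omega) (by omega)).mp h'
    omega
  · show cycW m (Function.update ω' (e % m) b) q.pos _ < q.w q.pos _
    rw [hqe, hq,
      cycW_symm m ω' (eV m (e+1) (by omega)) (eV m e (by omega)),
      cycW_symm m (Function.update ω' (e % m) b) (eV m (e+1) (by omega)) (eV m e (by omega)),
      cycW_eval hm ω' e, cycW_eval hm (Function.update ω' (e % m) b) e,
      Function.update_self]
    exact hb
  · intro u v huv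
    show cycW m (Function.update ω' (e % m) b) u v = q.w u v
    rw [hq, cycW_update_eq hm]
    rw [hqe] at huv
    tauto

/-- representation of the position after a move, as a cycle with one updated edge. -/
lemma update_repr {m : ℕ} (hm : 3 ≤ m) (p q : NimPos (Fin m)) (ω : ℕ → ℕ)
    (hw : ∀ u v, p.w u v = cycW m ω u v)
    (hrest : ∀ u v, ¬(u = p.pos ∧ v = q.pos ∨ u = q.pos ∧ v = p.pos) → q.w u v = p.w u v)
    (e : ℕ)
    (hd : (p.pos = eV m e (by omega) ∧ q.pos = eV m (e+1) (by omega)) ∨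
          (q.pos = eV m e (by omega) ∧ p.pos = eV m (e+1) (by omega))) :
    ∀ u v, q.w u v = cycW m (Function.update ω (e % m) (q.w p.pos q.pos)) u v := by
  have hm0 : 0 < m := by omega
  set a := q.w p.pos q.pos with ha
  have hkey : cycW m (Function.update ω (e % m) a)
      (eV m e (by omega)) (eV m (e+1) (by omega)) = a := by
    rw [cycW_eval hm, Function.update_self]
  have hsym : cycW m (Function.update ω (e % m) a)
      (eV m (e+1) (by omega)) (eV m e (by omega)) = a := by
    rw [cycW_symm m (Function.update ω (e % m) a)
      (eV m (e+1) (by omega)) (eV m e (by omega))]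
    exact hkey
  intro u v
  by_cases hc : (u = p.pos ∧ v = q.pos) ∨ (u = q.pos ∧ v = p.pos)
  · have hq1 : q.w u v = a := by
      rcases hc with ⟨rfl, rfl⟩ | ⟨rfl, rfl⟩
      · rfl
      · exact q.symm _ _
    rw [hq1]
    rcases hd with ⟨hp2, hq2⟩ | ⟨hq2, hp2⟩ <;> rcases hc with ⟨rfl, rfl⟩ | ⟨rfl, rfl⟩
    · conv_rhs => rw [hp2, hq2]
      exact hkey.symm
    · conv_rhs => rw [hp2, hq2]
      exact hsym.symm
    · conv_rhs => rw [hp2, hq2]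
      exact hsym.symm
    · conv_rhs => rw [hp2, hq2]
      exact hkey.symm
  · rw [hrest u v hc, hw, cycW_update_eq hm]
    intro hcon
    apply hc
    rcases hd with ⟨hp2, hq2⟩ | ⟨hq2, hp2⟩ <;>
      rw [← hp2, ← hq2] at hcon <;> tauto

/-- analysis of the first player's move on a cycle position. -/
lemma move_analysis {m : ℕ} (hm : 3 ≤ m) (p q : NimPos (Fin m)) (ω : ℕ → ℕ)
    (hw : ∀ u v, p.w u v = cycW m ω u v) (h : NimMove p q) :
    ∃ e : ℕ, e < m ∧ q.w p.pos q.pos < ω (e % m) ∧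
      ((p.pos = eV m e (by omega) ∧ q.pos = eV m (e+1) (by omega)) ∨
       (q.pos = eV m e (by omega) ∧ p.pos = eV m (e+1) (by omega))) ∧
      (∀ u v, q.w u v = cycW m (Function.update ω (e % m) (q.w p.pos q.pos)) u v) := by
  have hm0 : 0 < m := by omega
  obtain ⟨hne, hlt, hrest⟩ := h
  rw [hw] at hlt
  have hpos : 0 < cycW m ω p.pos q.pos := lt_of_le_of_lt (Nat.zero_le _) hlt
  have hdir : (p.pos.val + 1) % m = q.pos.val ∨ (q.pos.val + 1) % m = p.pos.val := by
    unfold cycW at hpos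
    by_contra hcon
    push_neg at hcon
    rw [if_neg hcon.1, if_neg hcon.2] at hpos
    omega
  have hnotboth : ¬((p.pos.val + 1) % m = q.pos.val ∧ (q.pos.val + 1) % m = p.pos.val) := by
    rintro ⟨h1, h2⟩
    have h3 : (p.pos.val + 2) % m = (p.pos.val + 0) % m := by
      have e1 : p.pos.val + 2 = p.pos.val + 1 + 1 := by omega
      rw [e1, ← Nat.mod_add_mod, h1, h2, Nat.add_zero, Nat.mod_eq_of_lt p.pos.isLt]
    have := (mod_inj p.pos.val 2 0 (by omega) (by omega)).mp h3
    omega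
  rcases hdir with hfwd | hbwd
  · have hup : p.pos = eV m p.pos.val (by omega) :=
      Fin.ext (by rw [eV_val hm0, Nat.mod_eq_of_lt p.pos.isLt])
    have huq : q.pos = eV m (p.pos.val + 1) (by omega) :=
      Fin.ext (by rw [eV_val hm0]; exact hfwd.symm)
    refine ⟨p.pos.val, p.pos.isLt, ?_, Or.inl ⟨hup, huq⟩, ?_⟩
    · rw [Nat.mod_eq_of_lt p.pos.isLt]
      have hval : cycW m ω p.pos q.pos = ω p.pos.val := by
        unfold cycW
        rw [if_pos hfwd, if_neg (fun hc => hnotboth ⟨hfwd, hc⟩), Nat.add_zero]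
      rwa [hval] at hlt
    · exact update_repr hm p q ω hw hrest p.pos.val (Or.inl ⟨hup, huq⟩)
  · have hup : p.pos = eV m (q.pos.val + 1) (by omega) :=
      Fin.ext (by rw [eV_val hm0]; exact hbwd.symm)
    have huq : q.pos = eV m q.pos.val (by omega) :=
      Fin.ext (by rw [eV_val hm0, Nat.mod_eq_of_lt q.pos.isLt])
    refine ⟨q.pos.val, q.pos.isLt, ?_, Or.inr ⟨huq, hup⟩, ?_⟩
    · rw [Nat.mod_eq_of_lt q.pos.isLt]
      have hval : cycW m ω p.pos q.pos = ω q.pos.val := by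
        unfold cycW
        rw [if_neg (fun hc => hnotboth ⟨hc, hbwd⟩), if_pos hbwd, Nat.zero_add]
      rwa [hval] at hlt
    · exact update_repr hm p q ω hw hrest q.pos.val (Or.inr ⟨huq, hup⟩)

lemma upd1_eval {m : ℕ} (ω : ℕ → ℕ) (e c j a : ℕ) (h1 : c < m) (hj : j < m) (hne : c ≠ j) :
    Function.update ω ((e + j) % m) a ((e + c) % m) = ω ((e + c) % m) :=
  Function.update_of_ne (fun hh => hne ((mod_inj e c j h1 hj).mp hh)) a ω

lemma upd2_eval {m : ℕ} (ω : ℕ → ℕ) (e c j1 j2 a1 a2 : ℕ)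
    (h1 : c < m) (hj1 : j1 < m) (hj2 : j2 < m) (hne1 : c ≠ j1) (hne2 : c ≠ j2) :
    Function.update (Function.update ω ((e + j1) % m) a1) ((e + j2) % m) a2 ((e + c) % m)
      = ω ((e + c) % m) := by
  rw [upd1_eval _ e c j2 a2 h1 hj2 hne2, upd1_eval _ e c j1 a1 h1 hj1 hne1]

lemma upd2_eval_mid {m : ℕ} (ω : ℕ → ℕ) (e j1 j2 a1 a2 : ℕ)
    (hj1 : j1 < m) (hj2 : j2 < m) (hne : j1 ≠ j2) :
    Function.update (Function.update ω ((e + j1) % m) a1) ((e + j2) % m) a2 ((e + j1) % m)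
      = a1 := by
  rw [upd1_eval _ e j1 j2 a2 hj1 hj2 hne, Function.update_self]

/-- the second player's response: from any position reachable in one move from a good
position, there is a move back to a good position. -/
lemma response {n : ℕ} (hn : 2 ≤ n) (p q : NimPos (Fin (2*n))) (hp : Good n p)
    (h : NimMove p q) : ∃ r, NimMove q r ∧ Good n r := by
  have hm : 3 ≤ 2*n := by omega
  have hm0 : 0 < 2*n := by omega
  obtain ⟨ω, hw, hinv⟩ := hp
  obtain ⟨e, he, hlt, hdir, hq⟩ := move_analysis hm p q ω hw h
  set a := q.w p.pos q.pos with ha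
  set ω' := Function.update ω (e % (2*n)) a with hω'
  rcases hdir with ⟨hpe, hqe⟩ | ⟨hqe, hpe⟩
  · -- forward move along edge e; p at eV e, q at eV (e+1)
    have hs : p.pos.val = e := by rw [hpe, eV_val hm0, Nat.mod_eq_of_lt he]
    rw [hs] at hinv
    rcases hinv with hPf | hPbF | hPbB
    · -- paired position: complete the pair, setting edge e+1 to a
      have hp0 := hPf 0 (by omega)
      norm_num at hp0
      have hb : a < ω' ((e + 1) % (2*n)) := by
        rw [hω']
        rw [show e % (2*n) = (e + 0) % (2*n) from rfl]
        rw [upd1_eval ω e 1 0 a (by omega) (by omega) (by omega)]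
        rw [← hp0.1]
        exact hlt
      refine ⟨_, step_fwd hm q ω' hq (e+1) hqe a hb, ?_⟩
      refine ⟨Function.update ω' ((e+1) % (2*n)) a, fun u v => rfl, ?_⟩
      rcases Nat.eq_zero_or_pos a with ha0 | ha0
      · -- a = 0 : broken cycle, PbF at e+2
        right; left
        constructor
        · show Function.update ω' ((e+1) % (2*n)) a (((eV (2*n) (e+1+1) (by omega)).val + (2*n-1)) % (2*n)) = 0
          rw [eV_val hm0, Nat.mod_add_mod,
            show e+1+1 + (2*n-1) = (e + 1) + 2*n from by omega, Nat.add_mod_right,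
            Function.update_self]
          exact ha0
        · refine ⟨2*n - 2, by rw [Nat.even_iff]; omega, by omega, ?_, ?_⟩
          · intro i hi
            rw [eV_val hm0, Nat.mod_add_mod, show e+1+1 + i = e + (2+i) from by omega, hω',
              show e % (2*n) = (e + 0) % (2*n) from rfl,
              upd2_eval ω e (2+i) 0 1 a a (by omega) (by omega) (by omega) (by omega) (by omega)]
            exact Pf.pos hPf (2+i) (by omega)
          · rw [eV_val hm0, Nat.mod_add_mod, show e+1+1 + (2*n-2) = (e + 0) + 2*n from by omega,
              Nat.add_mod_right, hω',
              show e % (2*n) = (e + 0) % (2*n) from rfl,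
              upd2_eval_mid ω e 0 1 a a (by omega) (by omega) (by omega)]
            exact ha0
      · -- a > 0 : still paired at e+2
        left
        intro i hi
        rw [eV_val hm0, Nat.mod_add_mod, Nat.mod_add_mod]
        by_cases hii : i + 1 < n
        · have hnext := hPf (i+1) hii
          rw [show e+1+1 + 2*i = e + (2*(i+1)) from by omega,
              show e+1+1 + (2*i+1) = e + (2*(i+1)+1) from by omega, hω',
              show e % (2*n) = (e + 0) % (2*n) from rfl,
              upd2_eval ω e (2*(i+1)) 0 1 a a (by omega) (by omega) (by omega) (by omega) (by omega),
              upd2_eval ω e (2*(i+1)+1) 0 1 a a (by omega) (by omega) (by omega) (by omega) (by omega)]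
          exact hnext
        · have hieq : i = n - 1 := by omega
          rw [show e+1+1 + 2*i = (e + 0) + 2*n from by omega,
              show e+1+1 + (2*i+1) = (e + 1) + 2*n from by omega,
              Nat.add_mod_right, Nat.add_mod_right, hω',
              show e % (2*n) = (e + 0) % (2*n) from rfl,
              upd2_eval_mid ω e 0 1 a a (by omega) (by omega) (by omega),
              Function.update_self]
          exact ⟨rfl, ha0⟩
    · -- broken, zero edge behind: either cancel the move or continue
      obtain ⟨hz, d, hde, hdm, hrun, hzd⟩ := hPbF
      rw [Nat.even_iff] at hde
      have hd1 : 0 < d := by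
        rcases Nat.eq_zero_or_pos d with h0 | h0
        · exfalso
          rw [h0] at hzd
          rw [show (e + 0) % (2*n) = e % (2*n) from rfl] at hzd
          omega
        · exact h0
      have hd2 : 2 ≤ d := by omega
      rcases Nat.eq_zero_or_pos a with ha0 | ha0
      · -- a = 0 : continue forward, zeroing edge e+1
        have hb : (0:ℕ) < ω' ((e + 1) % (2*n)) := by
          rw [hω', show e % (2*n) = (e + 0) % (2*n) from rfl,
            upd1_eval ω e 1 0 a (by omega) (by omega) (by omega)]
          exact hrun 1 (by omega)
        refine ⟨_, step_fwd hm q ω' hq (e+1) hqe 0 hb, ?_⟩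
        refine ⟨Function.update ω' ((e+1) % (2*n)) 0, fun u v => rfl, Or.inr (Or.inl ⟨?_, ?_⟩)⟩
        · rw [eV_val hm0, Nat.mod_add_mod,
            show e+1+1 + (2*n-1) = (e + 1) + 2*n from by omega, Nat.add_mod_right,
            Function.update_self]
        · refine ⟨d - 2, by rw [Nat.even_iff]; omega, by omega, ?_, ?_⟩
          · intro i hi
            rw [eV_val hm0, Nat.mod_add_mod, show e+1+1 + i = e + (2+i) from by omega, hω',
              show e % (2*n) = (e + 0) % (2*n) from rfl,
              upd2_eval ω e (2+i) 0 1 a 0 (by omega) (by omega) (by omega) (by omega) (by omega)]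
            exact hrun (2+i) (by omega)
          · rw [eV_val hm0, Nat.mod_add_mod, show e+1+1 + (d-2) = e + d from by omega, hω',
              show e % (2*n) = (e + 0) % (2*n) from rfl,
              upd2_eval ω e d 0 1 a 0 (by omega) (by omega) (by omega) (by omega) (by omega)]
            exact hzd
      · -- a > 0 : move back along edge e, zeroing it
        have hb : (0:ℕ) < ω' (e % (2*n)) := by
          rw [hω', Function.update_self]
          exact ha0
        refine ⟨_, step_bwd hm q ω' hq e hqe 0 hb, ?_⟩
        refine ⟨Function.update ω' (e % (2*n)) 0, fun u v => rfl, Or.inr (Or.inl ⟨?_, ?_⟩)⟩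
        · rw [eV_val hm0, Nat.mod_add_mod, hω',
            show e % (2*n) = (e + 0) % (2*n) from rfl,
            upd2_eval ω e (2*n-1) 0 0 a 0 (by omega) (by omega) (by omega) (by omega) (by omega)]
          exact hz
        · refine ⟨0, by rw [Nat.even_iff], by omega, by omega, ?_⟩
          rw [eV_val hm0, Nat.add_zero, Nat.mod_mod_of_dvd e dvd_rfl,
            show e % (2*n) = (e + 0) % (2*n) from rfl, Function.update_self]
    · -- PbB is impossible for a forward move
      exfalso
      have := hPbB.1
      rw [Nat.mod_eq_of_lt he] at this
      rw [Nat.mod_eq_of_lt he] at hlt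
      omega
  · -- backward move along edge e; q at eV e, p at eV (e+1)
    have hs : p.pos.val = (e+1) % (2*n) := by rw [hpe, eV_val hm0]
    rw [hs] at hinv
    have hqe' : q.pos = eV (2*n) (e + (2*n-1) + 1) (by omega) := by
      rw [hqe]
      apply Fin.ext
      rw [eV_val hm0, eV_val hm0, show e + (2*n-1) + 1 = e + 2*n from by omega,
        Nat.add_mod_right]
    rcases hinv with hPf | hPbF | hPbB
    · -- paired position: complete the pair, setting edge e-1 to a
      have hPf' : ∀ i < n, ω ((e + (2*i+1)) % (2*n)) = ω ((e + (2*i+2)) % (2*n)) ∧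
          0 < ω ((e + (2*i+1)) % (2*n)) := by
        intro i hi
        have := hPf i hi
        rwa [Nat.mod_add_mod, Nat.mod_add_mod, show e+1+2*i = e + (2*i+1) from by omega,
          show e+1+(2*i+1) = e + (2*i+2) from by omega] at this
      have hposAll : ∀ c < 2*n, 0 < ω ((e + c) % (2*n)) := by
        intro c hc
        rcases Nat.eq_zero_or_pos c with rfl | hc0
        · have := Pf.pos hPf (2*n-1) (by omega)
          rwa [Nat.mod_add_mod, show e+1+(2*n-1) = (e + 0) + 2*n from by omega,
            Nat.add_mod_right] at this
        · have := Pf.pos hPf (c-1) (by omega)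
          rwa [Nat.mod_add_mod, show e+1+(c-1) = e + c from by omega] at this
      have hpair := (hPf' (n-1) (by omega)).1
      rw [show 2*(n-1)+1 = 2*n-1 from by omega,
        show e + (2*(n-1)+2) = (e + 0) + 2*n from by omega, Nat.add_mod_right] at hpair
      have hb : a < ω' ((e + (2*n-1)) % (2*n)) := by
        rw [hω', show e % (2*n) = (e + 0) % (2*n) from rfl,
          upd1_eval ω e (2*n-1) 0 a (by omega) (by omega) (by omega), hpair]
        exact hlt
      refine ⟨_, step_bwd hm q ω' hq (e + (2*n-1)) hqe' a hb, ?_⟩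
      refine ⟨Function.update ω' ((e + (2*n-1)) % (2*n)) a, fun u v => rfl, ?_⟩
      rcases Nat.eq_zero_or_pos a with ha0 | ha0
      · -- a = 0 : broken cycle, PbB at e-1
        right; right
        constructor
        · rw [eV_val hm0, Nat.mod_mod_of_dvd _ dvd_rfl, Function.update_self]
          exact ha0
        · refine ⟨2*n - 2, by rw [Nat.even_iff]; omega, by omega, ?_, ?_⟩
          · intro i hi
            rw [eV_val hm0, Nat.mod_add_mod,
              show e + (2*n-1) + (2*n-1-i) = (e + (2*n-2-i)) + 2*n from by omega,
              Nat.add_mod_right, hω', show e % (2*n) = (e + 0) % (2*n) from rfl,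
              upd2_eval ω e (2*n-2-i) 0 (2*n-1) a a (by omega) (by omega) (by omega)
                (by omega) (by omega)]
            exact hposAll (2*n-2-i) (by omega)
          · rw [eV_val hm0, Nat.mod_add_mod,
              show e + (2*n-1) + (2*n-1-(2*n-2)) = (e + 0) + 2*n from by omega,
              Nat.add_mod_right, hω', show e % (2*n) = (e + 0) % (2*n) from rfl,
              upd2_eval_mid ω e 0 (2*n-1) a a (by omega) (by omega) (by omega)]
            exact ha0
      · -- a > 0 : still paired at e-1
        left
        intro i hi
        rw [eV_val hm0, Nat.mod_add_mod, Nat.mod_add_mod]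
        rcases Nat.eq_zero_or_pos i with rfl | hi0
        · rw [show e + (2*n-1) + 2*0 = e + (2*n-1) from by omega,
            show e + (2*n-1) + (2*0+1) = (e + 0) + 2*n from by omega,
            Nat.add_mod_right, Function.update_self, hω',
            show e % (2*n) = (e + 0) % (2*n) from rfl,
            upd2_eval_mid ω e 0 (2*n-1) a a (by omega) (by omega) (by omega)]
          exact ⟨rfl, ha0⟩
        · have hprev := hPf' (i-1) (by omega)
          rw [show 2*(i-1)+1 = 2*i-1 from by omega,
            show 2*(i-1)+2 = 2*i from by omega] at hprev
          rw [show e + (2*n-1) + 2*i = (e + (2*i-1)) + 2*n from by omega,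
            show e + (2*n-1) + (2*i+1) = (e + 2*i) + 2*n from by omega,
            Nat.add_mod_right, Nat.add_mod_right, hω',
            show e % (2*n) = (e + 0) % (2*n) from rfl,
            upd2_eval ω e (2*i-1) 0 (2*n-1) a a (by omega) (by omega) (by omega)
              (by omega) (by omega),
            upd2_eval ω e (2*i) 0 (2*n-1) a a (by omega) (by omega) (by omega)
              (by omega) (by omega)]
          exact hprev
    · -- PbF is impossible for a backward move
      exfalso
      have h1 := hPbF.1
      rw [Nat.mod_add_mod, show e+1+(2*n-1) = (e + 0) + 2*n from by omega,
        Nat.add_mod_right] at h1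
      rw [show e % (2*n) = (e + 0) % (2*n) from rfl] at hlt
      omega
    · -- broken, zero edge ahead: either cancel the move or continue
      obtain ⟨hz, d, hde, hdm, hrun, hzd⟩ := hPbB
      rw [Nat.even_iff] at hde
      rw [Nat.mod_mod_of_dvd _ dvd_rfl] at hz
      simp only [Nat.mod_add_mod] at hrun hzd
      have hd1 : 0 < d := by
        rcases Nat.eq_zero_or_pos d with h0 | h0
        · exfalso
          rw [h0, show e + 1 + (2*n-1-0) = (e + 0) + 2*n from by omega,
            Nat.add_mod_right] at hzd
          rw [show e % (2*n) = (e + 0) % (2*n) from rfl] at hlt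
          omega
        · exact h0
      have hd2 : 2 ≤ d := by omega
      rcases Nat.eq_zero_or_pos a with ha0 | ha0
      · -- a = 0 : continue backward, zeroing edge e-1
        have hrun1 := hrun 1 (by omega)
        rw [show e + 1 + (2*n-1-1) = e + (2*n-1) from by omega] at hrun1
        have hb : (0:ℕ) < ω' ((e + (2*n-1)) % (2*n)) := by
          rw [hω', show e % (2*n) = (e + 0) % (2*n) from rfl,
            upd1_eval ω e (2*n-1) 0 a (by omega) (by omega) (by omega)]
          exact hrun1
        refine ⟨_, step_bwd hm q ω' hq (e + (2*n-1)) hqe' 0 hb, ?_⟩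
        refine ⟨Function.update ω' ((e + (2*n-1)) % (2*n)) 0, fun u v => rfl,
          Or.inr (Or.inr ⟨?_, ?_⟩)⟩
        · rw [eV_val hm0, Nat.mod_mod_of_dvd _ dvd_rfl, Function.update_self]
        · refine ⟨d - 2, by rw [Nat.even_iff]; omega, by omega, ?_, ?_⟩
          · intro i hi
            have hr := hrun (i+2) (by omega)
            rw [show e + 1 + (2*n-1-(i+2)) = e + (2*n-2-i) from by omega] at hr
            rw [eV_val hm0, Nat.mod_add_mod,
              show e + (2*n-1) + (2*n-1-i) = (e + (2*n-2-i)) + 2*n from by omega,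
              Nat.add_mod_right, hω', show e % (2*n) = (e + 0) % (2*n) from rfl,
              upd2_eval ω e (2*n-2-i) 0 (2*n-1) a 0 (by omega) (by omega) (by omega)
                (by omega) (by omega)]
            exact hr
          · rw [show e + 1 + (2*n-1-d) = e + (2*n-d) from by omega] at hzd
            rw [eV_val hm0, Nat.mod_add_mod,
              show e + (2*n-1) + (2*n-1-(d-2)) = (e + (2*n-d)) + 2*n from by omega,
              Nat.add_mod_right, hω', show e % (2*n) = (e + 0) % (2*n) from rfl,
              upd2_eval ω e (2*n-d) 0 (2*n-1) a 0 (by omega) (by omega) (by omega)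
                (by omega) (by omega)]
            exact hzd
      · -- a > 0 : move back along edge e, zeroing it
        have hb : (0:ℕ) < ω' (e % (2*n)) := by
          rw [hω', Function.update_self]
          exact ha0
        refine ⟨_, step_fwd hm q ω' hq e hqe 0 hb, ?_⟩
        refine ⟨Function.update ω' (e % (2*n)) 0, fun u v => rfl,
          Or.inr (Or.inr ⟨?_, ?_⟩)⟩
        · rw [eV_val hm0, Nat.mod_mod_of_dvd _ dvd_rfl, hω',
            show e % (2*n) = (e + 0) % (2*n) from rfl,
            upd2_eval ω e 1 0 0 a 0 (by omega) (by omega) (by omega) (by omega) (by omega)]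
          exact hz
        · refine ⟨0, by rw [Nat.even_iff], by omega, by omega, ?_⟩
          rw [eV_val hm0, Nat.mod_add_mod,
            show e + 1 + (2*n-1-0) = (e + 0) + 2*n from by omega, Nat.add_mod_right,
            show e % (2*n) = (e + 0) % (2*n) from rfl, Function.update_self]

/-- total weight, the decreasing measure. -/
def S {m : ℕ} (p : NimPos (Fin m)) : ℕ := ∑ x : Fin m × Fin m, p.w x.1 x.2

lemma S_lt {m : ℕ} {p q : NimPos (Fin m)} (h : NimMove p q) : S q < S p := by
  obtain ⟨hne, hlt, hrest⟩ := h
  apply Finset.sum_lt_sum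
  · intro x _
    by_cases hc : (x.1 = p.pos ∧ x.2 = q.pos) ∨ (x.1 = q.pos ∧ x.2 = p.pos)
    · rcases hc with ⟨h1, h2⟩ | ⟨h1, h2⟩ <;> rw [h1, h2]
      · exact le_of_lt hlt
      · calc q.w q.pos p.pos = q.w p.pos q.pos := q.symm _ _
          _ ≤ p.w p.pos q.pos := le_of_lt hlt
          _ = p.w q.pos p.pos := p.symm _ _
    · rw [hrest x.1 x.2 hc]
  · exact ⟨(p.pos, q.pos), Finset.mem_univ _, hlt⟩

lemma main {n : ℕ} (hn : 2 ≤ n) :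
    ∀ N (p : NimPos (Fin (2*n))), S p < N → Good n p → MoverLoses p := by
  intro N
  induction N with
  | zero => exact fun p hS _ => absurd hS (Nat.not_lt_zero _)
  | succ N ih =>
    intro p hS hG
    refine MoverLoses.intro p (fun q hq => (response hn p q hG hq).choose)
      (fun q hq => (response hn p q hG hq).choose_spec.1) (fun q hq => ?_)
    have hspec := (response hn p q hG hq).choose_spec
    refine ih _ ?_ hspec.2
    show S (response hn p q hG hq).choose < N
    have h1 := S_lt hq
    have h2 := S_lt hspec.1
    omega

end Stmt4Aux

/-- Nim on the even cycle `C_{2n}` with every edge of the same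
weight `k ≥ 1`: from any starting vertex the second player wins. -/
theorem stmt4 (n k : ℕ) (hn : 2 ≤ n) (hk : 1 ≤ k) (s : Fin (2*n)) :
    MoverLoses ⟨cycW (2*n) (fun _ => k), cycW_symm (2*n) (fun _ => k), s⟩ := by
  have hG : Stmt4Aux.Good n ⟨cycW (2*n) (fun _ => k), cycW_symm (2*n) (fun _ => k), s⟩ :=
    ⟨fun _ => k, fun u v => rfl, Or.inl (fun i _ => ⟨rfl, hk⟩)⟩
  exact Stmt4Aux.main hn (Stmt4Aux.S ⟨cycW (2*n) (fun _ => k), cycW_symm (2*n) (fun _ => k), s⟩ + 1)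
    _ (by omega) hG
end

section
/- Let G be the even cycle C_{2n} with positive integer weight assignment ω, let m = min over edges e of ω(e), and let G' be the weighted graph on the same vertices with weights ω'(e) = ω(e) − m (edges of weight 0 deleted), played from the same starting vertex. Then a position of Nim on graphs in G is a p-position (first-player win) if and only if the corresponding position in G' is a p-position; equivalently, the first player wins G if and only if there is an odd-length path from the starting vertex to a leaf in G', and the second player wins G if and only if every maximal path from the starting vertex in G' has even length. -/
namespace NimAux

lemma loses_not_wins {V : Type} {p : NimPos V} (h : MoverLoses p) : ¬ MoverWins p := by
  have key : ∀ p : NimPos V, MoverLoses p → ∀ q, NimMove p q → ¬ MoverLoses q := by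
    intro p hp
    induction hp with
    | intro p f hmove hwin IH =>
      intro q hq hLq
      cases hLq with
      | intro q2 g gmove gwin =>
        exact IH q hq (g (f q hq) (hmove q hq)) (gmove _ _) (gwin _ _)
  rintro ⟨q, hq, hLq⟩
  exact key p h q hq hLq

lemma mod2 {m x : ℕ} (hm : 0 < m) (h : x < 2*m) :
    x % m = if x < m then x else x - m := by
  split_ifs with h'
  · exact Nat.mod_eq_of_lt h'
  · rw [Nat.mod_eq_sub_mod (by omega), Nat.mod_eq_of_lt (by omega)]

noncomputable def mu (m : ℕ) (w : ℕ → ℕ) : ℕ := sInf (w '' Set.Iio m)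

lemma mu_le {m : ℕ} (w : ℕ → ℕ) {i : ℕ} (hi : i < m) : mu m w ≤ w i :=
  Nat.sInf_le ⟨i, hi, rfl⟩

lemma mu_mem {m : ℕ} (w : ℕ → ℕ) (hm : 0 < m) : ∃ j, j < m ∧ w j = mu m w := by
  have : mu m w ∈ w '' Set.Iio m := Nat.sInf_mem ⟨w 0, 0, hm, rfl⟩
  obtain ⟨j, hj, hjw⟩ := this
  exact ⟨j, hj, hjw⟩

/-! fwdLen suite -/

lemma fwdLen_eq {m s d : ℕ} (w : ℕ → ℕ) (hdm : d ≤ m)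
    (hpos : ∀ i < d, 0 < w ((s + i) % m))
    (hblock : d = m ∨ w ((s + d) % m) = 0) : fwdLen m w s = d := by
  unfold fwdLen
  apply le_antisymm
  · apply csSup_le ⟨0, by simp⟩
    rintro x ⟨hx1, hx2⟩
    by_contra hlt
    push_neg at hlt
    rcases hblock with rfl | hb
    · omega
    · have := hx2 d hlt
      omega
  · exact le_csSup ⟨m, fun x hx => hx.1⟩ ⟨hdm, hpos⟩

lemma fwdLen_le {m s : ℕ} (w : ℕ → ℕ) : fwdLen m w s ≤ m :=
  csSup_le ⟨0, by simp⟩ fun _ hx => hx.1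

lemma fwdLen_spec {m s : ℕ} (w : ℕ → ℕ) :
    ∀ i < fwdLen m w s, 0 < w ((s + i) % m) := by
  have h : fwdLen m w s ∈ {d | d ≤ m ∧ ∀ i < d, 0 < w ((s + i) % m)} :=
    Nat.sSup_mem ⟨0, by simp⟩ ⟨m, fun _ hx => hx.1⟩
  exact h.2

lemma fwdLen_blocker {m s : ℕ} (w : ℕ → ℕ) (h : fwdLen m w s < m) :
    w ((s + fwdLen m w s) % m) = 0 := by
  by_contra h0
  have h1 : fwdLen m w s + 1 ∈ {d | d ≤ m ∧ ∀ i < d, 0 < w ((s + i) % m)} := by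
    refine ⟨by omega, fun i hi => ?_⟩
    rcases Nat.lt_succ_iff_lt_or_eq.mp hi with h2 | h2
    · exact fwdLen_spec w i h2
    · subst h2; exact Nat.pos_of_ne_zero h0
  have h2 : fwdLen m w s + 1 ≤ fwdLen m w s :=
    le_csSup (⟨m, fun _ hx => hx.1⟩ : BddAbove _) h1
  omega

lemma fwd_pos {m s : ℕ} (w : ℕ → ℕ) (hm : 0 < m) (hs : s < m) (h : 0 < w s) :
    1 ≤ fwdLen m w s := by
  apply le_csSup (⟨m, fun _ hx => hx.1⟩ : BddAbove _)
  refine ⟨by omega, fun i hi => ?_⟩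
  have : i = 0 := by omega
  subst this
  rw [Nat.add_zero, Nat.mod_eq_of_lt hs]
  exact h

lemma fwd_lt {m s j : ℕ} (w : ℕ → ℕ) (hs : s < m) (hj : j < m) (h0 : w j = 0) :
    fwdLen m w s < m := by
  by_contra h
  push_neg at h
  have hFm : fwdLen m w s = m := le_antisymm (fwdLen_le w) h
  rcases le_or_gt s j with hle | hlt
  · have h2 := fwdLen_spec (m := m) (s := s) w (j - s) (by omega)
    rw [show s + (j - s) = j by omega, Nat.mod_eq_of_lt hj] at h2
    omega
  · have h2 := fwdLen_spec (m := m) (s := s) w (j + m - s) (by omega)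
    rw [show s + (j + m - s) = j + m by omega, Nat.add_mod_right,
      Nat.mod_eq_of_lt hj] at h2
    omega

lemma fwd_zero {m s : ℕ} (w : ℕ → ℕ) (hs : s < m) (h : w s = 0) :
    fwdLen m w s = 0 := by
  apply fwdLen_eq w (by omega) (by omega)
  right
  rwa [Nat.add_zero, Nat.mod_eq_of_lt hs]

lemma fwd_shift {m s d : ℕ} (w : ℕ → ℕ) (hm : 0 < m) (hs : s < m)
    (hd1 : 1 ≤ d) (hdm : d < m)
    (hpos : ∀ i, 1 ≤ i → i < d → 0 < w ((s + i) % m))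
    (hblock : w ((s + d) % m) = 0) :
    fwdLen m w ((s + 1) % m) = d - 1 := by
  apply fwdLen_eq w (by omega)
  · intro i hi
    rw [Nat.mod_add_mod, show s + 1 + i = s + (i + 1) by omega]
    exact hpos (i + 1) (by omega) (by omega)
  · right
    rw [Nat.mod_add_mod, show s + 1 + (d - 1) = s + d by omega]
    exact hblock

lemma fwd_full {m s : ℕ} (w : ℕ → ℕ) (hm : 2 ≤ m) (hs : s < m)
    (hall : ∀ j, j < m → j ≠ s → 0 < w j) (h0 : w s = 0) :
    fwdLen m w ((s + 1) % m) = m - 1 := by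
  apply fwdLen_eq w (by omega)
  · intro i hi
    rw [Nat.mod_add_mod]
    refine hall _ (Nat.mod_lt _ (by omega)) ?_
    rw [mod2 (by omega) (by omega)]
    split_ifs <;> omega
  · right
    rw [Nat.mod_add_mod, show s + 1 + (m - 1) = s + m by omega,
      Nat.add_mod_right, Nat.mod_eq_of_lt hs]
    exact h0

end NimAux
namespace NimAux

/-! bwdLen suite -/

lemma bwdLen_eq {m s d : ℕ} (w : ℕ → ℕ) (hdm : d ≤ m)
    (hpos : ∀ i < d, 0 < w ((s + m - 1 - i) % m))
    (hblock : d = m ∨ w ((s + m - 1 - d) % m) = 0) : bwdLen m w s = d := by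
  unfold bwdLen
  apply le_antisymm
  · apply csSup_le ⟨0, by simp⟩
    rintro x ⟨hx1, hx2⟩
    by_contra hlt
    push_neg at hlt
    rcases hblock with rfl | hb
    · omega
    · have := hx2 d hlt
      omega
  · exact le_csSup ⟨m, fun x hx => hx.1⟩ ⟨hdm, hpos⟩

lemma bwdLen_le {m s : ℕ} (w : ℕ → ℕ) : bwdLen m w s ≤ m :=
  csSup_le ⟨0, by simp⟩ fun _ hx => hx.1

lemma bwdLen_spec {m s : ℕ} (w : ℕ → ℕ) :
    ∀ i < bwdLen m w s, 0 < w ((s + m - 1 - i) % m) := by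
  have h : bwdLen m w s ∈ {d | d ≤ m ∧ ∀ i < d, 0 < w ((s + m - 1 - i) % m)} :=
    Nat.sSup_mem ⟨0, by simp⟩ ⟨m, fun _ hx => hx.1⟩
  exact h.2

lemma bwdLen_blocker {m s : ℕ} (w : ℕ → ℕ) (h : bwdLen m w s < m) :
    w ((s + m - 1 - bwdLen m w s) % m) = 0 := by
  by_contra h0
  have h1 : bwdLen m w s + 1 ∈ {d | d ≤ m ∧ ∀ i < d, 0 < w ((s + m - 1 - i) % m)} := by
    refine ⟨by omega, fun i hi => ?_⟩
    rcases Nat.lt_succ_iff_lt_or_eq.mp hi with h2 | h2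
    · exact bwdLen_spec w i h2
    · subst h2; exact Nat.pos_of_ne_zero h0
  have h2 : bwdLen m w s + 1 ≤ bwdLen m w s :=
    le_csSup (⟨m, fun _ hx => hx.1⟩ : BddAbove _) h1
  omega

lemma bwd_pos {m s : ℕ} (w : ℕ → ℕ) (hm : 0 < m) (hs : s < m)
    (h : 0 < w ((s + m - 1) % m)) : 1 ≤ bwdLen m w s := by
  apply le_csSup (⟨m, fun _ hx => hx.1⟩ : BddAbove _)
  refine ⟨by omega, fun i hi => ?_⟩
  have : i = 0 := by omega
  subst this
  rw [Nat.sub_zero]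
  exact h

lemma bwd_lt {m s j : ℕ} (w : ℕ → ℕ) (hs : s < m) (hj : j < m) (h0 : w j = 0) :
    bwdLen m w s < m := by
  by_contra h
  push_neg at h
  have hFm : bwdLen m w s = m := le_antisymm (bwdLen_le w) h
  rcases lt_or_ge j s with hlt | hle
  · have h2 := bwdLen_spec (m := m) (s := s) w (s - 1 - j) (by omega)
    rw [show s + m - 1 - (s - 1 - j) = j + m by omega, Nat.add_mod_right,
      Nat.mod_eq_of_lt hj] at h2
    omega
  · have h2 := bwdLen_spec (m := m) (s := s) w (s + m - 1 - j) (by omega)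
    rw [show s + m - 1 - (s + m - 1 - j) = j by omega, Nat.mod_eq_of_lt hj] at h2
    omega

lemma bwd_zero {m s : ℕ} (w : ℕ → ℕ) (h : w ((s + m - 1) % m) = 0) :
    bwdLen m w s = 0 := by
  apply bwdLen_eq w (by omega) (by omega)
  right
  rwa [Nat.sub_zero]

lemma bwd_shift {m s d : ℕ} (w : ℕ → ℕ) (hm : 0 < m) (hs : s < m)
    (hd1 : 1 ≤ d) (hdm : d < m)
    (hpos : ∀ i, 1 ≤ i → i < d → 0 < w ((s + m - 1 - i) % m))
    (hblock : w ((s + m - 1 - d) % m) = 0) :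
    bwdLen m w ((s + m - 1) % m) = d - 1 := by
  have key : ∀ i, i + 2 ≤ m → ((s + m - 1) % m + m - 1 - i) % m = (s + m - 1 - (i + 1)) % m := by
    intro i hi
    rw [show (s + m - 1) % m + m - 1 - i = (s + m - 1) % m + (m - 1 - i) by omega,
      Nat.mod_add_mod,
      show s + m - 1 + (m - 1 - i) = (s + m - 1 - (i + 1)) + m by omega,
      Nat.add_mod_right]
  apply bwdLen_eq w (by omega)
  · intro i hi
    rw [key i (by omega)]
    exact hpos (i + 1) (by omega) (by omega)
  · right
    rw [key (d - 1) (by omega), show d - 1 + 1 = d by omega]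
    exact hblock

lemma bwd_full {m t : ℕ} (w : ℕ → ℕ) (hm : 2 ≤ m) (ht : t < m)
    (hall : ∀ j, j < m → j ≠ t → 0 < w j) (h0 : w t = 0) :
    bwdLen m w t = m - 1 := by
  apply bwdLen_eq w (by omega)
  · intro i hi
    refine hall _ (Nat.mod_lt _ (by omega)) ?_
    rw [mod2 (by omega) (by omega)]
    split_ifs <;> omega
  · right
    rwa [show t + m - 1 - (m - 1) = t by omega, Nat.mod_eq_of_lt ht]

end NimAux
namespace NimAux

def cposN (m : ℕ) (w : ℕ → ℕ) (s : Fin m) : NimPos (Fin m) :=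
  ⟨cycW m w, cycW_symm m w, s⟩

lemma NimPos.ext' {V : Type} {p q : NimPos V} (hw : p.w = q.w) (hp : p.pos = q.pos) :
    p = q := by
  cases p; cases q
  cases hw; cases hp
  rfl

lemma cycW_adj {m : ℕ} (hm : 3 ≤ m) (ω : ℕ → ℕ) (e : ℕ) (he : e < m)
    (u v : Fin m) (hu : u.val = e) (hv : v.val = (e + 1) % m) :
    cycW m ω u v = ω e := by
  unfold cycW
  rw [hu, hv, if_pos rfl, Nat.mod_add_mod, if_neg, Nat.add_zero]
  rw [mod2 (by omega) (by omega)]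
  split_ifs <;> omega

lemma cycW_update_off {m : ℕ} (w : ℕ → ℕ) (k e : ℕ)
    (u v : Fin m)
    (h1 : ¬(u.val = e ∧ v.val = (e + 1) % m))
    (h2 : ¬(u.val = (e + 1) % m ∧ v.val = e)) :
    cycW m (Function.update w e k) u v = cycW m w u v := by
  unfold cycW
  congr 1
  · by_cases hc : (u.val + 1) % m = v.val
    · rw [if_pos hc, if_pos hc]
      by_cases hue : u.val = e
      · exact absurd ⟨hue, by rw [← hc, hue]⟩ h1
      · rw [Function.update_of_ne hue]
    · rw [if_neg hc, if_neg hc]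
  · by_cases hc : (v.val + 1) % m = u.val
    · rw [if_pos hc, if_pos hc]
      by_cases hve : v.val = e
      · exact absurd ⟨by rw [← hc, hve], hve⟩ h2
      · rw [Function.update_of_ne hve]
    · rw [if_neg hc, if_neg hc]

lemma move_fwd {m : ℕ} (hm : 4 ≤ m) (w : ℕ → ℕ) (s : Fin m) (k : ℕ)
    (hk : k < w s.val) :
    NimMove (cposN m w s)
      (cposN m (Function.update w s.val k) ⟨(s.val + 1) % m, Nat.mod_lt _ (by omega)⟩) := by
  have hs : s.val < m := s.isLt
  refine ⟨?_, ?_, ?_⟩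
  · intro heq
    have h1 : s.val = (s.val + 1) % m := congrArg Fin.val heq
    rw [mod2 (by omega) (by omega)] at h1
    split_ifs at h1 <;> omega
  · show cycW m (Function.update w s.val k) s ⟨(s.val + 1) % m, _⟩ <
      cycW m w s ⟨(s.val + 1) % m, _⟩
    rw [cycW_adj (by omega) _ s.val hs _ _ rfl rfl,
      cycW_adj (by omega) _ s.val hs _ _ rfl rfl, Function.update_self]
    exact hk
  · intro u v huv
    apply cycW_update_off
    · rintro ⟨h1, h2⟩
      exact huv (Or.inl ⟨Fin.ext h1, Fin.ext h2⟩)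
    · rintro ⟨h1, h2⟩
      exact huv (Or.inr ⟨Fin.ext h1, Fin.ext h2⟩)

lemma move_bwd {m : ℕ} (hm : 4 ≤ m) (w : ℕ → ℕ) (s : Fin m) (k : ℕ)
    (hk : k < w ((s.val + m - 1) % m)) :
    NimMove (cposN m w s)
      (cposN m (Function.update w ((s.val + m - 1) % m) k)
        ⟨(s.val + m - 1) % m, Nat.mod_lt _ (by omega)⟩) := by
  have hs : s.val < m := s.isLt
  have ht : (s.val + m - 1) % m < m := Nat.mod_lt _ (by omega)
  have hts : ((s.val + m - 1) % m + 1) % m = s.val := by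
    rw [mod2 (by omega) (show s.val + m - 1 < 2*m by omega)]
    rw [mod2 (by omega) (by split_ifs <;> omega)]
    split_ifs <;> omega
  have hne : (s.val + m - 1) % m ≠ s.val := by
    rw [mod2 (by omega) (by omega)]
    split_ifs <;> omega
  refine ⟨?_, ?_, ?_⟩
  · intro heq
    exact hne (congrArg Fin.val heq).symm
  · show cycW m (Function.update w ((s.val + m - 1) % m) k) s ⟨(s.val + m - 1) % m, _⟩ <
      cycW m w s ⟨(s.val + m - 1) % m, _⟩
    rw [cycW_symm, cycW_symm m w]
    rw [cycW_adj (by omega) _ ((s.val + m - 1) % m) ht _ _ rfl hts.symm,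
      cycW_adj (by omega) _ ((s.val + m - 1) % m) ht _ _ rfl hts.symm,
      Function.update_self]
    exact hk
  · intro u v huv
    apply cycW_update_off
    · rintro ⟨h1, h2⟩
      rw [hts] at h2
      exact huv (Or.inr ⟨Fin.ext h1, Fin.ext h2⟩)
    · rintro ⟨h1, h2⟩
      rw [hts] at h1
      exact huv (Or.inl ⟨Fin.ext h1, Fin.ext h2⟩)

lemma move_char {m : ℕ} (hm : 4 ≤ m) (w : ℕ → ℕ) (s : Fin m) (q : NimPos (Fin m))
    (h : NimMove (cposN m w s) q) :
    (∃ k, k < w s.val ∧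
      q = cposN m (Function.update w s.val k) ⟨(s.val + 1) % m, Nat.mod_lt _ (by omega)⟩) ∨
    (∃ k, k < w ((s.val + m - 1) % m) ∧
      q = cposN m (Function.update w ((s.val + m - 1) % m) k)
        ⟨(s.val + m - 1) % m, Nat.mod_lt _ (by omega)⟩) := by
  obtain ⟨hne, hlt, hoff⟩ := h
  simp only [cposN] at hne hlt hoff
  have hsv : s.val < m := s.isLt
  have hqv : q.pos.val < m := q.pos.isLt
  have hadj : (s.val + 1) % m = q.pos.val ∨ (q.pos.val + 1) % m = s.val := by
    by_contra hc
    push_neg at hc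
    have hz : cycW m w s q.pos = 0 := by
      unfold cycW
      rw [if_neg hc.1, if_neg hc.2]
    rw [hz] at hlt
    omega
  have hnb : ¬((s.val + 1) % m = q.pos.val ∧ (q.pos.val + 1) % m = s.val) := by
    rintro ⟨h1, h2⟩
    rw [← h1, Nat.mod_add_mod, mod2 (by omega) (by omega)] at h2
    split_ifs at h2 <;> omega
  rcases hadj with h1 | h2
  · -- forward move
    left
    have hvq : cycW m w s q.pos = w s.val :=
      cycW_adj (by omega) w s.val hsv s q.pos rfl h1.symm
    rw [hvq] at hlt
    refine ⟨q.w s q.pos, hlt, ?_⟩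
    apply NimPos.ext'
    · funext u v
      show q.w u v = cycW m (Function.update w s.val (q.w s q.pos)) u v
      by_cases hc1 : u = s ∧ v = q.pos
      · rw [hc1.1, hc1.2,
          cycW_adj (by omega) _ s.val hsv s q.pos rfl h1.symm, Function.update_self]
      · by_cases hc2 : u = q.pos ∧ v = s
        · rw [hc2.1, hc2.2, cycW_symm,
            cycW_adj (by omega) _ s.val hsv s q.pos rfl h1.symm, Function.update_self]
          exact q.symm q.pos s
        · rw [cycW_update_off, hoff u v (by tauto)]
          · rintro ⟨hh1, hh2⟩
            rw [h1] at hh2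
            exact hc1 ⟨Fin.ext hh1, Fin.ext hh2⟩
          · rintro ⟨hh1, hh2⟩
            rw [h1] at hh1
            exact hc2 ⟨Fin.ext hh1, Fin.ext hh2⟩
    · exact Fin.ext h1.symm
  · -- backward move
    right
    have hqt : q.pos.val = (s.val + m - 1) % m := by
      rw [mod2 (by omega) (by omega)] at h2
      rw [mod2 (by omega) (by omega)]
      split_ifs at h2 <;> split_ifs <;> omega
    have hvq : cycW m w s q.pos = w q.pos.val := by
      rw [cycW_symm]
      exact cycW_adj (by omega) w q.pos.val hqv q.pos s rfl h2.symm
    rw [hvq] at hlt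
    refine ⟨q.w s q.pos, by rw [← hqt]; exact hlt, ?_⟩
    apply NimPos.ext'
    · funext u v
      show q.w u v = cycW m (Function.update w ((s.val + m - 1) % m) (q.w s q.pos)) u v
      rw [← hqt]
      by_cases hc1 : u = q.pos ∧ v = s
      · rw [hc1.1, hc1.2,
          cycW_adj (by omega) _ q.pos.val hqv q.pos s rfl h2.symm, Function.update_self]
        exact q.symm q.pos s
      · by_cases hc2 : u = s ∧ v = q.pos
        · rw [hc2.1, hc2.2, cycW_symm,
            cycW_adj (by omega) _ q.pos.val hqv q.pos s rfl h2.symm, Function.update_self]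
        · rw [cycW_update_off, hoff u v (by tauto)]
          · rintro ⟨hh1, hh2⟩
            rw [h2] at hh2
            exact hc1 ⟨Fin.ext hh1, Fin.ext hh2⟩
          · rintro ⟨hh1, hh2⟩
            rw [h2] at hh1
            exact hc2 ⟨Fin.ext hh1, Fin.ext hh2⟩
    · exact Fin.ext hqt

end NimAux
namespace NimAux

def Wpred (m : ℕ) (w : ℕ → ℕ) (s : ℕ) : Prop :=
  Odd (fwdLen m (fun i => w i - mu m w) s) ∨ Odd (bwdLen m (fun i => w i - mu m w) s)

lemma idx1 {m s : ℕ} (hm : 0 < m) (hs : s < m) : ((s + 1) % m + m - 1) % m = s := by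
  rw [show (s + 1) % m + m - 1 = (s + 1) % m + (m - 1) by omega, Nat.mod_add_mod,
    show s + 1 + (m - 1) = s + m by omega, Nat.add_mod_right, Nat.mod_eq_of_lt hs]

lemma not_Wpred_iff {m w s} : ¬ Wpred m w s ↔
    Even (fwdLen m (fun i => w i - mu m w) s) ∧ Even (bwdLen m (fun i => w i - mu m w) s) := by
  rw [Wpred, not_or, Nat.not_odd_iff_even, Nat.not_odd_iff_even]

/-- common: the new minimum after updating edge `e` to `k` with `mu ≤ k`. -/
lemma mu_update_ge {m : ℕ} (hm : 0 < m) (w : ℕ → ℕ) (e k : ℕ) (he : e < m)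
    (hk : mu m w ≤ k) (hj : ∃ j, j < m ∧ j ≠ e ∧ w j = mu m w) :
    mu m (Function.update w e k) = mu m w := by
  obtain ⟨j, hjm, hje, hjw⟩ := hj
  apply le_antisymm
  · have h1 := mu_le (Function.update w e k) hjm
    rwa [Function.update_of_ne hje, hjw] at h1
  · obtain ⟨j1, hj1, hjw1⟩ := mu_mem (Function.update w e k) hm
    rw [← hjw1]
    by_cases hj1e : j1 = e
    · subst hj1e; rw [Function.update_self]; exact hk
    · rw [Function.update_of_ne hj1e]; exact mu_le w hj1

lemma mu_update_lt {m : ℕ} (hm : 0 < m) (w : ℕ → ℕ) (e k : ℕ) (he : e < m)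
    (hk : k < mu m w) :
    mu m (Function.update w e k) = k := by
  apply le_antisymm
  · have h1 := mu_le (Function.update w e k) he
    rwa [Function.update_self] at h1
  · obtain ⟨j1, hj1, hjw1⟩ := mu_mem (Function.update w e k) hm
    rw [← hjw1]
    by_cases hj1e : j1 = e
    · subst hj1e; rw [Function.update_self]
    · rw [Function.update_of_ne hj1e]
      have := mu_le w hj1
      omega

lemma step_bad_fwd {m : ℕ} (hm : 4 ≤ m) (hme : Even m) {w : ℕ → ℕ} {s : ℕ} (hs : s < m)
    (hW : ¬ Wpred m w s) {k : ℕ} (hk : k < w s) :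
    Wpred m (Function.update w s k) ((s + 1) % m) := by
  have hm0 : 0 < m := by omega
  rw [not_Wpred_iff] at hW
  obtain ⟨hF, hB⟩ := hW
  rcases lt_or_ge k (mu m w) with hkμ | hkμ
  · -- k below the minimum: the reduced graph is a full run of length m-1
    have hμ2 : mu m (Function.update w s k) = k := mu_update_lt hm0 w s k hs hkμ
    left
    rw [fwd_full (m := m) (s := s) _ (by omega) hs]
    · rw [Nat.odd_iff]; rw [Nat.even_iff] at hme; omega
    · intro j hj hjs
      have := mu_le w hj
      rw [hμ2, Function.update_of_ne hjs]
      omega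
    · rw [hμ2, Function.update_self]
      omega
  · -- k at least the minimum
    have hws : mu m w < w s := by omega
    have hFd : 1 ≤ fwdLen m (fun i => w i - mu m w) s :=
      fwd_pos _ hm0 hs (by beta_reduce; omega)
    obtain ⟨j₀, hj₀, hj₀w⟩ := mu_mem w hm0
    have hj₀s : j₀ ≠ s := by rintro rfl; omega
    have hFm : fwdLen m (fun i => w i - mu m w) s < m :=
      fwd_lt (j := j₀) _ hs hj₀ (by beta_reduce; omega)
    have hd2 : 2 ≤ fwdLen m (fun i => w i - mu m w) s := by
      rw [Nat.even_iff] at hF; omega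
    have hμ2 : mu m (Function.update w s k) = mu m w :=
      mu_update_ge hm0 w s k hs hkμ ⟨j₀, hj₀, hj₀s, hj₀w⟩
    left
    rw [fwd_shift (m := m) (s := s) (d := fwdLen m (fun i => w i - mu m w) s) _
      hm0 hs (by omega) hFm ?_ ?_]
    · rw [Nat.odd_iff]; rw [Nat.even_iff] at hF; omega
    · intro i h1 hi
      have hne : (s + i) % m ≠ s := by
        rw [mod2 hm0 (by omega)]; split_ifs <;> omega
      simp only [hμ2, Function.update_of_ne hne]
      exact fwdLen_spec _ i hi
    · have hne : (s + fwdLen m (fun i => w i - mu m w) s) % m ≠ s := by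
        rw [mod2 hm0 (by omega)]; split_ifs <;> omega
      simp only [hμ2, Function.update_of_ne hne]
      exact fwdLen_blocker _ hFm

lemma step_bad_bwd {m : ℕ} (hm : 4 ≤ m) (hme : Even m) {w : ℕ → ℕ} {s : ℕ} (hs : s < m)
    (hW : ¬ Wpred m w s) {k : ℕ} (hk : k < w ((s + m - 1) % m)) :
    Wpred m (Function.update w ((s + m - 1) % m) k) ((s + m - 1) % m) := by
  have hm0 : 0 < m := by omega
  have ht : (s + m - 1) % m < m := Nat.mod_lt _ hm0
  rw [not_Wpred_iff] at hW
  obtain ⟨hF, hB⟩ := hW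
  rcases lt_or_ge k (mu m w) with hkμ | hkμ
  · have hμ2 : mu m (Function.update w ((s + m - 1) % m) k) = k :=
      mu_update_lt hm0 w _ k ht hkμ
    right
    rw [bwd_full (m := m) (t := (s + m - 1) % m) _ (by omega) ht]
    · rw [Nat.odd_iff]; rw [Nat.even_iff] at hme; omega
    · intro j hj hjs
      have := mu_le w hj
      rw [hμ2, Function.update_of_ne hjs]
      omega
    · rw [hμ2, Function.update_self]
      omega
  · have hws : mu m w < w ((s + m - 1) % m) := by omega
    have hFd : 1 ≤ bwdLen m (fun i => w i - mu m w) s := by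
      apply bwd_pos _ hm0 hs
      beta_reduce
      omega
    obtain ⟨j₀, hj₀, hj₀w⟩ := mu_mem w hm0
    have hj₀s : j₀ ≠ (s + m - 1) % m := by rintro rfl; omega
    have hFm : bwdLen m (fun i => w i - mu m w) s < m :=
      bwd_lt (j := j₀) _ hs hj₀ (by beta_reduce; omega)
    have hd2 : 2 ≤ bwdLen m (fun i => w i - mu m w) s := by
      rw [Nat.even_iff] at hB; omega
    have hμ2 : mu m (Function.update w ((s + m - 1) % m) k) = mu m w :=
      mu_update_ge hm0 w _ k ht hkμ ⟨j₀, hj₀, hj₀s, hj₀w⟩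
    right
    rw [bwd_shift (m := m) (s := s) (d := bwdLen m (fun i => w i - mu m w) s) _
      hm0 hs (by omega) hFm ?_ ?_]
    · rw [Nat.odd_iff]; rw [Nat.even_iff] at hB; omega
    · intro i h1 hi
      have hne : (s + m - 1 - i) % m ≠ (s + m - 1) % m := by
        rw [mod2 hm0 (by omega), mod2 hm0 (by omega)]
        split_ifs <;> omega
      simp only [hμ2, Function.update_of_ne hne]
      exact bwdLen_spec _ i hi
    · have hne : (s + m - 1 - bwdLen m (fun i => w i - mu m w) s) % m ≠ (s + m - 1) % m := by
        rw [mod2 hm0 (by omega), mod2 hm0 (by omega)]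
        split_ifs <;> omega
      simp only [hμ2, Function.update_of_ne hne]
      exact bwdLen_blocker _ hFm

lemma step_good_fwd {m : ℕ} (hm : 4 ≤ m) {w : ℕ → ℕ} {s : ℕ} (hs : s < m)
    (hOdd : Odd (fwdLen m (fun i => w i - mu m w) s)) :
    mu m w < w s ∧ ¬ Wpred m (Function.update w s (mu m w)) ((s + 1) % m) := by
  have hm0 : 0 < m := by omega
  have hd1 : 1 ≤ fwdLen m (fun i => w i - mu m w) s := by
    rcases hOdd with ⟨c, hc⟩; omega
  have hrs : 0 < w s - mu m w := by
    have := fwdLen_spec (m := m) (s := s) (fun i => w i - mu m w) 0 (by omega)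
    rwa [Nat.add_zero, Nat.mod_eq_of_lt hs] at this
  obtain ⟨j₀, hj₀, hj₀w⟩ := mu_mem w hm0
  have hj₀s : j₀ ≠ s := by rintro rfl; omega
  have hFm : fwdLen m (fun i => w i - mu m w) s < m :=
    fwd_lt (j := j₀) _ hs hj₀ (by beta_reduce; omega)
  have hμ2 : mu m (Function.update w s (mu m w)) = mu m w :=
    mu_update_ge hm0 w s (mu m w) hs le_rfl ⟨j₀, hj₀, hj₀s, hj₀w⟩
  refine ⟨by omega, ?_⟩
  rw [not_Wpred_iff]
  constructor
  · rw [fwd_shift (m := m) (s := s) (d := fwdLen m (fun i => w i - mu m w) s) _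
      hm0 hs (by omega) hFm ?_ ?_]
    · rw [Nat.even_iff]; rw [Nat.odd_iff] at hOdd; omega
    · intro i h1 hi
      have hne : (s + i) % m ≠ s := by
        rw [mod2 hm0 (by omega)]; split_ifs <;> omega
      simp only [hμ2, Function.update_of_ne hne]
      exact fwdLen_spec _ i hi
    · have hne : (s + fwdLen m (fun i => w i - mu m w) s) % m ≠ s := by
        rw [mod2 hm0 (by omega)]; split_ifs <;> omega
      simp only [hμ2, Function.update_of_ne hne]
      exact fwdLen_blocker _ hFm
  · rw [bwd_zero]
    · exact Even.zero
    · rw [idx1 hm0 hs]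
      simp only [hμ2, Function.update_self]
      omega

lemma step_good_bwd {m : ℕ} (hm : 4 ≤ m) {w : ℕ → ℕ} {s : ℕ} (hs : s < m)
    (hOdd : Odd (bwdLen m (fun i => w i - mu m w) s)) :
    mu m w < w ((s + m - 1) % m) ∧
      ¬ Wpred m (Function.update w ((s + m - 1) % m) (mu m w)) ((s + m - 1) % m) := by
  have hm0 : 0 < m := by omega
  have ht : (s + m - 1) % m < m := Nat.mod_lt _ hm0
  have hd1 : 1 ≤ bwdLen m (fun i => w i - mu m w) s := by
    rcases hOdd with ⟨c, hc⟩; omega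
  have hrs : 0 < w ((s + m - 1) % m) - mu m w := by
    have := bwdLen_spec (m := m) (s := s) (fun i => w i - mu m w) 0 (by omega)
    rwa [Nat.sub_zero] at this
  obtain ⟨j₀, hj₀, hj₀w⟩ := mu_mem w hm0
  have hj₀s : j₀ ≠ (s + m - 1) % m := by rintro rfl; omega
  have hFm : bwdLen m (fun i => w i - mu m w) s < m :=
    bwd_lt (j := j₀) _ hs hj₀ (by beta_reduce; omega)
  have hμ2 : mu m (Function.update w ((s + m - 1) % m) (mu m w)) = mu m w :=
    mu_update_ge hm0 w _ (mu m w) ht le_rfl ⟨j₀, hj₀, hj₀s, hj₀w⟩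
  refine ⟨by omega, ?_⟩
  rw [not_Wpred_iff]
  constructor
  · rw [fwd_zero]
    · exact Even.zero
    · exact ht
    · simp only [hμ2, Function.update_self]
      omega
  · rw [bwd_shift (m := m) (s := s) (d := bwdLen m (fun i => w i - mu m w) s) _
      hm0 hs (by omega) hFm ?_ ?_]
    · rw [Nat.even_iff]; rw [Nat.odd_iff] at hOdd; omega
    · intro i h1 hi
      have hne : (s + m - 1 - i) % m ≠ (s + m - 1) % m := by
        rw [mod2 hm0 (by omega), mod2 hm0 (by omega)]
        split_ifs <;> omega
      simp only [hμ2, Function.update_of_ne hne]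
      exact bwdLen_spec _ i hi
    · have hne : (s + m - 1 - bwdLen m (fun i => w i - mu m w) s) % m ≠ (s + m - 1) % m := by
        rw [mod2 hm0 (by omega), mod2 hm0 (by omega)]
        split_ifs <;> omega
      simp only [hμ2, Function.update_of_ne hne]
      exact bwdLen_blocker _ hFm

end NimAux
namespace NimAux

lemma master {m : ℕ} (hm : 4 ≤ m) (hme : Even m) :
    ∀ N (w : ℕ → ℕ) (s : Fin m), (∑ i ∈ Finset.range m, w i) ≤ N →
      (Wpred m w s.val → MoverWins (cposN m w s)) ∧
      (¬ Wpred m w s.val → MoverLoses (cposN m w s)) := by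
  intro N
  induction N with
  | zero =>
    intro w s hsum
    have hz : ∀ i, i < m → w i = 0 := by
      intro i hi
      have h1 : w i ≤ ∑ i ∈ Finset.range m, w i :=
        Finset.single_le_sum (fun _ _ => Nat.zero_le _) (Finset.mem_range.mpr hi)
      omega
    have hnm : ∀ q, ¬ NimMove (cposN m w s) q := by
      intro q hq
      rcases move_char hm w s q hq with ⟨k, hk, _⟩ | ⟨k, hk, _⟩
      · rw [hz s.val s.isLt] at hk; omega
      · rw [hz _ (Nat.mod_lt _ (by omega))] at hk; omega
    have hnW : ¬ Wpred m w s.val := by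
      rw [not_Wpred_iff]
      constructor
      · rw [fwd_zero _ s.isLt (by rw [hz s.val s.isLt]; omega)]
        exact Even.zero
      · rw [bwd_zero _ (by rw [hz _ (Nat.mod_lt _ (by omega))]; omega)]
        exact Even.zero
    refine ⟨fun hW => absurd hW hnW, fun _ => ?_⟩
    exact MoverLoses.intro _ (fun q _ => q)
      (fun q hq => absurd hq (hnm q)) (fun q hq => absurd hq (hnm q))
  | succ N IH =>
    intro w s hsum
    have hs : s.val < m := s.isLt
    have hsum' : ∀ e k, e < m → k < w e →
        (∑ i ∈ Finset.range m, Function.update w e k i) ≤ N := by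
      intro e k he hk
      rw [Finset.sum_update_of_mem (Finset.mem_range.mpr he), ← Finset.erase_eq]
      have h1 : w e + ∑ i ∈ (Finset.range m).erase e, w i = ∑ i ∈ Finset.range m, w i :=
        Finset.add_sum_erase _ _ (Finset.mem_range.mpr he)
      omega
    constructor
    · intro hW
      rcases hW with hOdd | hOdd
      · obtain ⟨hlt, hnW⟩ := step_good_fwd hm hs hOdd
        exact ⟨_, move_fwd hm w s (mu m w) hlt,
          (IH _ _ (hsum' _ _ hs hlt)).2 hnW⟩
      · obtain ⟨hlt, hnW⟩ := step_good_bwd hm hs hOdd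
        exact ⟨_, move_bwd hm w s (mu m w) hlt,
          (IH _ _ (hsum' _ _ (Nat.mod_lt _ (by omega)) hlt)).2 hnW⟩
    · intro hW
      have key : ∀ q, NimMove (cposN m w s) q → MoverWins q := by
        intro q hq
        rcases move_char hm w s q hq with ⟨k, hk, rfl⟩ | ⟨k, hk, rfl⟩
        · exact (IH _ _ (hsum' _ _ hs hk)).1 (step_bad_fwd hm hme hs hW hk)
        · exact (IH _ _ (hsum' _ _ (Nat.mod_lt _ (by omega)) hk)).1
            (step_bad_bwd hm hme hs hW hk)
      exact MoverLoses.intro _ (fun q hq => (key q hq).choose)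
        (fun q hq => (key q hq).choose_spec.1)
        (fun q hq => (key q hq).choose_spec.2)

end NimAux

/-- for the even cycle `C_{2n}` with weights `ω`, minimum weight
`m`, and reduced graph `G'` with weights `ω - m`, a position is a p-position in
`G` iff it is one in `G'`; equivalently the first player wins `G` iff from the
starting vertex there is an odd-length path to a leaf in `G'` (i.e. one of the
two maximal runs of positive edges away from the start has odd length). -/
theorem stmt6 (n : ℕ) (hn : 2 ≤ n) (ω : ℕ → ℕ) (hω : ∀ i < 2*n, 0 < ω i)
    (m : ℕ)
    (hm : m = (Finset.range (2*n)).inf'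
        (Finset.nonempty_range_iff.mpr (by omega)) ω)
    (s : Fin (2*n)) :
    (MoverWins ⟨cycW (2*n) ω, cycW_symm (2*n) ω, s⟩ ↔
      MoverWins ⟨cycW (2*n) (fun i => ω i - m),
        cycW_symm (2*n) (fun i => ω i - m), s⟩) ∧
    (MoverWins ⟨cycW (2*n) ω, cycW_symm (2*n) ω, s⟩ ↔
      (Odd (fwdLen (2*n) (fun i => ω i - m) s.val) ∨
       Odd (bwdLen (2*n) (fun i => ω i - m) s.val))) := by
  have hm4 : 4 ≤ 2*n := by omega
  have hme : Even (2*n) := ⟨n, by omega⟩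
  have hm0 : 0 < 2*n := by omega
  have hmu : NimAux.mu (2*n) ω = m := by
    rw [hm]
    apply le_antisymm
    · obtain ⟨j, hj, hjw⟩ := Finset.exists_mem_eq_inf'
        (Finset.nonempty_range_iff.mpr (by omega : (2*n) ≠ 0)) ω
      rw [hjw]
      exact NimAux.mu_le ω (Finset.mem_range.mp hj)
    · obtain ⟨j, hj, hjw⟩ := NimAux.mu_mem ω hm0
      rw [← hjw]
      exact Finset.inf'_le _ (Finset.mem_range.mpr hj)
  obtain ⟨j₀, hj₀, hj₀w⟩ := NimAux.mu_mem ω hm0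
  have hj₀m : ω j₀ = m := by rw [hj₀w, hmu]
  have hmu' : NimAux.mu (2*n) (fun i => ω i - m) = 0 := by
    have h1 : NimAux.mu (2*n) (fun i => ω i - m) ≤ ω j₀ - m :=
      NimAux.mu_le (fun i => ω i - m) hj₀
    omega
  have hred : (fun i => ω i - NimAux.mu (2*n) ω) = (fun i => ω i - m) := by
    rw [hmu]
  have hred2 : (fun i => (fun i => ω i - m) i - NimAux.mu (2*n) (fun i => ω i - m))
      = (fun i => ω i - m) := by
    rw [hmu']
    funext i
    show ω i - m - 0 = ω i - m
    omega
  have hmw : ∀ w : ℕ → ℕ,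
      MoverWins (⟨cycW (2*n) w, cycW_symm (2*n) w, s⟩ : NimPos (Fin (2*n))) ↔
        NimAux.Wpred (2*n) w s.val := by
    intro w
    constructor
    · intro h
      by_contra hnW
      exact NimAux.loses_not_wins
        ((NimAux.master hm4 hme (∑ i ∈ Finset.range (2*n), w i) w s le_rfl).2 hnW) h
    · intro h
      exact (NimAux.master hm4 hme (∑ i ∈ Finset.range (2*n), w i) w s le_rfl).1 h
  have hW1 : NimAux.Wpred (2*n) ω s.val ↔
      (Odd (fwdLen (2*n) (fun i => ω i - m) s.val) ∨
       Odd (bwdLen (2*n) (fun i => ω i - m) s.val)) := by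
    rw [NimAux.Wpred, hred]
  have hW2 : NimAux.Wpred (2*n) (fun i => ω i - m) s.val ↔
      (Odd (fwdLen (2*n) (fun i => ω i - m) s.val) ∨
       Odd (bwdLen (2*n) (fun i => ω i - m) s.val)) := by
    rw [NimAux.Wpred, hred2]
  constructor
  · rw [hmw ω, hmw (fun i => ω i - m), hW1, hW2]
  · rw [hmw ω, hW1]
end

section
/- In Nim on graphs played on the complete bipartite graph K_{2,j} (j ≥ 1) with every edge of weight 1 and the indicator piece starting at a vertex of the partite set of size 2, the second player has a winning strategy. -/
-- auxiliary
def invW (j : ℕ) (S : Finset (Fin (j+2))) (u v : Fin (j+2)) : ℕ :=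
  if (u.val < 2 ∧ v ∈ S) ∨ (v.val < 2 ∧ u ∈ S) then 1 else 0

theorem invW_symm (j : ℕ) (S : Finset (Fin (j+2))) :
    ∀ u v, invW j S u v = invW j S v u := by
  intro u v; unfold invW; split_ifs <;> tauto

theorem moverLoses_congr {V : Type} (p q : NimPos V) (hw : p.w = q.w)
    (hp : p.pos = q.pos) : MoverLoses p → MoverLoses q := by
  cases p; cases q; cases hw; cases hp; exact id

theorem key_s7 (j : ℕ) (S : Finset (Fin (j+2))) :
    (∀ v ∈ S, 2 ≤ v.val) → ∀ a : Fin (j+2), a.val < 2 →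
    MoverLoses ⟨invW j S, invW_symm j S, a⟩ := by
  induction S using Finset.strongInduction with
  | _ S ih =>
    intro hS a ha
    set b : Fin (j+2) := if a.val = 0 then ⟨1, by omega⟩ else ⟨0, by omega⟩ with hbdef
    have hbval : b.val < 2 ∧ b.val ≠ a.val := by
      rw [hbdef]; split_ifs with h <;> constructor <;> simp <;> omega
    have key1 : ∀ q, NimMove ⟨invW j S, invW_symm j S, a⟩ q →
        q.pos ∈ S ∧ q.w a q.pos = 0 := by
      intro q h
      have h2 := h.2.1
      simp only at h2
      by_cases hm : q.pos ∈ S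
      · refine ⟨hm, ?_⟩
        have : invW j S a q.pos = 1 := by simp [invW, ha, hm]
        omega
      · exfalso
        have hna : a ∉ S := fun hmem => by have := hS a hmem; omega
        have : invW j S a q.pos = 0 := by
          unfold invW; rw [if_neg]; rintro (⟨_, h1⟩ | ⟨_, h1⟩)
          · exact hm h1
          · exact hna h1
        omega
    refine MoverLoses.intro _
      (fun q h => ⟨invW j (S.erase q.pos), invW_symm j _, b⟩) ?_ ?_
    · intro q h
      obtain ⟨hqS, hq0⟩ := key1 q h
      have hq2 : 2 ≤ q.pos.val := hS _ hqS
      have haq : a ≠ q.pos := h.1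
      refine ⟨fun e => by rw [e] at hq2; simp only at hq2; omega, ?_, ?_⟩
      · have h1 : q.w q.pos b = 1 := by
          rw [h.2.2 q.pos b (by
            rintro (⟨e1, _⟩ | ⟨_, e2⟩)
            · exact haq e1.symm
            · exact hbval.2 (congrArg Fin.val e2))]
          simp only
          simp [invW, hbval.1, hqS]
        have h0 : invW j (S.erase q.pos) q.pos b = 0 := by
          unfold invW; rw [if_neg]; rintro (⟨h1, _⟩ | ⟨_, h1⟩)
          · omega
          · exact Finset.notMem_erase _ _ h1
        simp only
        omega
      · intro u v huv
        simp only
        by_cases c1 : u = a ∧ v = q.pos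
        · obtain ⟨e1, e2⟩ := c1; subst e1; subst e2
          rw [hq0]
          unfold invW; rw [if_neg]; rintro (⟨_, h1⟩ | ⟨h1, _⟩)
          · exact Finset.notMem_erase _ _ h1
          · omega
        · by_cases c2 : u = q.pos ∧ v = a
          · obtain ⟨e1, e2⟩ := c2; subst e1; subst e2
            rw [q.symm, hq0]
            unfold invW; rw [if_neg]; rintro (⟨h1, _⟩ | ⟨_, h1⟩)
            · omega
            · exact Finset.notMem_erase _ _ h1
          · rw [h.2.2 u v (by tauto)]
            simp only
            unfold invW
            congr 1
            apply propext
            constructor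
            · rintro (⟨h1, h2⟩ | ⟨h1, h2⟩)
              · exact Or.inl ⟨h1, Finset.mem_of_mem_erase h2⟩
              · exact Or.inr ⟨h1, Finset.mem_of_mem_erase h2⟩
            · rintro (⟨h1, h2⟩ | ⟨h1, h2⟩)
              · refine Or.inl ⟨h1, Finset.mem_erase.2 ⟨?_, h2⟩⟩
                intro e; subst e
                have hu : u.val = a.val ∨ u.val = b.val := by omega
                rcases hu with hu | hu
                · exact c1 ⟨Fin.ext hu, rfl⟩
                · exact huv (Or.inr ⟨Fin.ext hu, rfl⟩)
              · refine Or.inr ⟨h1, Finset.mem_erase.2 ⟨?_, h2⟩⟩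
                intro e; subst e
                have hv : v.val = a.val ∨ v.val = b.val := by omega
                rcases hv with hv | hv
                · exact c2 ⟨rfl, Fin.ext hv⟩
                · exact huv (Or.inl ⟨rfl, Fin.ext hv⟩)
    · intro q h
      obtain ⟨hqS, _⟩ := key1 q h
      exact ih (S.erase q.pos) (Finset.erase_ssubset hqS)
        (fun v hv => hS v (Finset.mem_of_mem_erase hv)) b hbval.1

/-- Nim on `K_{2,j}` (`j ≥ 1`) with all weights 1, piece starting
at a vertex of the size-2 part: the second player wins. -/
theorem stmt7 (j : ℕ) (hj : 1 ≤ j) :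
    MoverLoses ⟨k2W j, k2W_symm j, (0 : Fin (j+2))⟩ := by
  have hw : invW j (Finset.univ.filter (fun v => 2 ≤ v.val)) = k2W j := by
    funext u v
    unfold invW k2W
    simp [Finset.mem_filter]
  exact moverLoses_congr
    ⟨invW j (Finset.univ.filter (fun v => 2 ≤ v.val)),
      invW_symm j _, (0 : Fin (j+2))⟩
    ⟨k2W j, k2W_symm j, (0 : Fin (j+2))⟩ hw rfl
    (key_s7 j _ (fun v hv => (Finset.mem_filter.1 hv).2) 0 (by simp))
end

section
/- Let SSB_j denote the graph K_{2,j} plus an edge e_{12} joining the two vertices v_1, v_2 of the partite set of size 2. In Nim on graphs with every edge of SSB_j given weight 1 and the indicator piece starting at v_1 (or v_2), the first player has a winning strategy: removing the edge e_{12} on the first move leaves the opponent in a losing position on K_{2,j}. -/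
section Stmt8Aux

lemma fin_two' (j : ℕ) (v : Fin (j+2)) (h : v.val < 2) : v = 0 ∨ v = 1 := by
  have h' : v.val = 0 ∨ v.val = 1 := by omega
  rcases h' with h0 | h1
  · exact Or.inl (Fin.ext (by simpa using h0))
  · exact Or.inr (Fin.ext (by simpa using h1))

/-- Invariant: piece on the size-2 part, only cross edges may be nonzero,
all weights ≤ 1, and each middle vertex is joined to `0` and `1` equally. -/
def InvP (j : ℕ) (p : NimPos (Fin (j+2))) : Prop :=
  p.pos.val < 2 ∧
  (∀ u v : Fin (j+2), ¬((u.val < 2 ∧ 2 ≤ v.val) ∨ (v.val < 2 ∧ 2 ≤ u.val)) → p.w u v = 0) ∧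
  (∀ v : Fin (j+2), 2 ≤ v.val → p.w 0 v = p.w 1 v) ∧
  (∀ u v, p.w u v ≤ 1)

/-- Number of middle vertices still joined to the size-2 part. -/
def countN (j : ℕ) (p : NimPos (Fin (j+2))) : ℕ :=
  (Finset.univ.filter fun v : Fin (j+2) => p.w 0 v ≠ 0).card

/-- The other vertex of the size-2 part. -/
def otherV (j : ℕ) (a : Fin (j+2)) : Fin (j+2) := if a = 0 then 1 else 0

lemma otherV_spec (j : ℕ) (a : Fin (j+2)) (ha : a.val < 2) :
    (a = 0 ∧ otherV j a = 1) ∨ (a = 1 ∧ otherV j a = 0) := by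
  rcases fin_two' j a ha with h | h
  · left; exact ⟨h, by simp [otherV, h]⟩
  · right; refine ⟨h, ?_⟩
    have hne : a ≠ 0 := by
      rw [h]; intro hc; have := congrArg Fin.val hc; simp at this
    simp [otherV, hne]

/-- The responding move: from `q` (piece on middle vertex `q.pos`), delete the
edge to the other size-2 vertex and move the piece there. -/
def respond (j : ℕ) (p q : NimPos (Fin (j+2))) : NimPos (Fin (j+2)) where
  w u v := if (u = q.pos ∧ v = otherV j p.pos) ∨ (u = otherV j p.pos ∧ v = q.pos) then 0
           else q.w u v
  symm u v := by
    by_cases h : (u = q.pos ∧ v = otherV j p.pos) ∨ (u = otherV j p.pos ∧ v = q.pos)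
    · rw [if_pos h, if_pos (by tauto)]
    · rw [if_neg h, if_neg (by tauto)]; exact q.symm u v
  pos := otherV j p.pos

lemma respond_spec (j : ℕ) (p q : NimPos (Fin (j+2))) (hI : InvP j p) (h : NimMove p q) :
    NimMove q (respond j p q) ∧ InvP j (respond j p q) ∧
      countN j (respond j p q) < countN j p := by
  obtain ⟨hpos, hz, hmatch, hle⟩ := hI
  obtain ⟨hne, hlt, hrest⟩ := h
  set a := p.pos with ha_def
  set m := q.pos with hm_def
  set b := otherV j a with hb_def
  have hb_or : (a = 0 ∧ b = 1) ∨ (a = 1 ∧ b = 0) := otherV_spec j a hpos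
  have h0v : (0 : Fin (j+2)).val = 0 := by simp
  have h1v : (1 : Fin (j+2)).val = 1 := by simp
  have h01 : (0 : Fin (j+2)) ≠ 1 := by intro hc; rw [hc, h1v] at h0v; omega
  have hbv : b.val < 2 := by rcases hb_or with ⟨_, h2⟩ | ⟨_, h2⟩ <;> rw [h2] <;> omega
  have hm2 : 2 ≤ m.val := by
    by_contra hc
    have h0 : p.w a m = 0 := hz a m (by omega)
    omega
  have hpwam : p.w a m = 1 := by have := hle a m; omega
  have hqwam : q.w a m = 0 := by omega
  have hqwma : q.w m a = 0 := by rw [q.symm]; exact hqwam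
  have hba : b ≠ a := by
    rcases hb_or with ⟨h1, h2⟩ | ⟨h1, h2⟩ <;> rw [h1, h2]
    exacts [h01.symm, h01]
  have hbm : b ≠ m := by intro hc; rw [hc] at hbv; omega
  have ham : a ≠ m := hne
  have h0m : (0 : Fin (j+2)) ≠ m := by intro hc; rw [← hc, h0v] at hm2; omega
  have h1m : (1 : Fin (j+2)) ≠ m := by intro hc; rw [← hc, h1v] at hm2; omega
  have hpwbm : p.w b m = 1 := by
    have hmm := hmatch m hm2
    rcases hb_or with ⟨h1, h2⟩ | ⟨h1, h2⟩ <;> rw [h1] at hpwam <;> rw [h2] <;> omega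
  have hqwbm : q.w b m = 1 := by
    rw [hrest b m (by tauto), hpwbm]
  have hqwmb : q.w m b = 1 := by rw [q.symm]; exact hqwbm
  have hw0m : (respond j p q).w 0 m = 0 := by
    show (if ((0:Fin (j+2)) = m ∧ m = b) ∨ ((0:Fin (j+2)) = b ∧ m = m) then 0
          else q.w 0 m) = 0
    rcases hb_or with ⟨h1, h2⟩ | ⟨h1, h2⟩
    · rw [if_neg (by rw [h2]; tauto), ← h1]; exact hqwam
    · rw [if_pos (by rw [h2]; tauto)]
  have hw1m : (respond j p q).w 1 m = 0 := by
    show (if ((1:Fin (j+2)) = m ∧ m = b) ∨ ((1:Fin (j+2)) = b ∧ m = m) then 0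
          else q.w 1 m) = 0
    rcases hb_or with ⟨h1, h2⟩ | ⟨h1, h2⟩
    · rw [if_pos (by rw [h2]; tauto)]
    · rw [if_neg (by rw [h2]; tauto), ← h1]; exact hqwam
  have hwuv : ∀ u v : Fin (j+2), ¬((u = m ∧ v = b) ∨ (u = b ∧ v = m)) →
      (respond j p q).w u v = q.w u v := by
    intro u v huv
    show (if (u = m ∧ v = b) ∨ (u = b ∧ v = m) then 0 else q.w u v) = q.w u v
    rw [if_neg huv]
  refine ⟨⟨Ne.symm hbm, ?_, ?_⟩, ⟨?_, ?_, ?_, ?_⟩, ?_⟩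
  · -- strict decrease on the response edge
    show (if (m = m ∧ b = b) ∨ (m = b ∧ b = m) then 0 else q.w m b) < q.w m b
    rw [if_pos (Or.inl ⟨rfl, rfl⟩), hqwmb]; omega
  · -- other weights untouched
    intro u v huv
    exact hwuv u v huv
  · -- new position on the small part
    exact hbv
  · -- non-cross edges are zero
    intro u v huv
    show (if (u = m ∧ v = b) ∨ (u = b ∧ v = m) then 0 else q.w u v) = 0
    by_cases hcond : (u = m ∧ v = b) ∨ (u = b ∧ v = m)
    · rw [if_pos hcond]
    · rw [if_neg hcond, hrest u v ?_]
      · exact hz u v huv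
      · rintro (⟨rfl, rfl⟩ | ⟨rfl, rfl⟩) <;> exact huv (by omega)
  · -- matching
    intro v hv
    by_cases hvm : v = m
    · subst hvm; rw [hw0m, hw1m]
    · rw [hwuv 0 v (by tauto), hwuv 1 v (by tauto),
        hrest 0 v (by rintro (⟨h1, rfl⟩ | ⟨h1, h2⟩) <;> [exact hvm rfl; exact h0m h1]),
        hrest 1 v (by rintro (⟨h1, rfl⟩ | ⟨h1, h2⟩) <;> [exact hvm rfl; exact h1m h1])]
      exact hmatch v hv
  · -- weights bounded by 1
    intro u v
    show (if (u = m ∧ v = b) ∨ (u = b ∧ v = m) then 0 else q.w u v) ≤ 1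
    by_cases hcond : (u = m ∧ v = b) ∨ (u = b ∧ v = m)
    · rw [if_pos hcond]; omega
    · rw [if_neg hcond]
      by_cases hmoved : (u = a ∧ v = m) ∨ (u = m ∧ v = a)
      · rcases hmoved with ⟨rfl, rfl⟩ | ⟨rfl, rfl⟩ <;> omega
      · rw [hrest u v (by tauto)]; exact hle u v
  · -- the count strictly decreases
    apply Finset.card_lt_card
    constructor
    · intro v hvmem
      simp only [Finset.mem_filter, Finset.mem_univ, true_and] at hvmem ⊢
      intro hpv0
      apply hvmem
      by_cases hvm : v = m
      · subst hvm; exact hw0m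
      · rw [hwuv 0 v (by tauto),
          hrest 0 v (by rintro (⟨h1, rfl⟩ | ⟨h1, h2⟩) <;> [exact hvm rfl; exact h0m h1])]
        exact hpv0
    · intro hsub
      have hp0m : p.w 0 m ≠ 0 := by
        have hmm := hmatch m hm2
        rcases hb_or with ⟨h1, h2⟩ | ⟨h1, h2⟩ <;> rw [h1] at hpwam <;> omega
      have hmm := hsub (by
        simp only [Finset.mem_filter, Finset.mem_univ, true_and]; exact hp0m)
      simp only [Finset.mem_filter, Finset.mem_univ, true_and] at hmm
      exact hmm hw0m

/-- On an `InvP` position the mover loses. -/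
lemma inv_loses (j : ℕ) (N : ℕ) :
    ∀ p : NimPos (Fin (j+2)), countN j p ≤ N → InvP j p → MoverLoses p := by
  induction N with
  | zero =>
    intro p hc hI
    obtain ⟨hpos, hz, hmatch, hle⟩ := hI
    have hnomove : ∀ q, ¬ NimMove p q := by
      intro q hq
      obtain ⟨hne, hlt, hrest⟩ := hq
      have hm2 : 2 ≤ q.pos.val := by
        by_contra hcc
        have h0 : p.w p.pos q.pos = 0 := hz p.pos q.pos (by omega)
        omega
      have hp0 : p.w 0 q.pos ≠ 0 := by
        have hmm := hmatch q.pos hm2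
        rcases fin_two' j p.pos hpos with h1 | h1 <;> rw [h1] at hlt <;> omega
      have hmem : q.pos ∈ Finset.univ.filter fun v : Fin (j+2) => p.w 0 v ≠ 0 := by
        simp only [Finset.mem_filter, Finset.mem_univ, true_and]; exact hp0
      have := Finset.card_pos.mpr ⟨q.pos, hmem⟩
      unfold countN at hc; omega
    exact MoverLoses.intro p (fun q _ => p)
      (fun q h => absurd h (hnomove q)) (fun q h => absurd h (hnomove q))
  | succ N ih =>
    intro p hc hI
    refine MoverLoses.intro p (fun q _ => respond j p q) ?_ ?_
    · intro q h
      exact (respond_spec j p q hI h).1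
    · intro q h
      obtain ⟨_, hI', hcount⟩ := respond_spec j p q hI h
      exact ih (respond j p q) (by omega) hI'

end Stmt8Aux

/-- Nim on `SSB_j = K_{2,j} + e_{12}` with all weights 1 and the
piece starting at `v₁` or `v₂` (the size-2 part `{0,1}`): the first player
wins, and removing the edge `e_{12}` on the first move (the move whose target
is the other size-2 vertex) leaves the opponent in a losing position. -/
theorem stmt8 (j : ℕ) (s : Fin (j+2)) (hs : s.val < 2) :
    MoverWins ⟨ssbW j, ssbW_symm j, s⟩ ∧
    ∀ q, NimMove ⟨ssbW j, ssbW_symm j, s⟩ q → q.pos.val < 2 →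
      MoverLoses q := by
  have hsv : s.val < 2 := hs
  have key : ∀ q, NimMove ⟨ssbW j, ssbW_symm j, s⟩ q → q.pos.val < 2 → MoverLoses q := by
    intro q hq hq2
    obtain ⟨hne, hlt, hrest⟩ := hq
    dsimp only at hne hlt hrest
    have hsvne : s.val ≠ q.pos.val := fun hc => hne (Fin.ext hc)
    have hssb : ssbW j s q.pos = 1 := by
      unfold ssbW; rw [if_pos (Or.inr ⟨hsv, hq2, hsvne⟩)]
    have hq0 : q.w s q.pos = 0 := by
      rw [hssb] at hlt; omega
    have hq0' : q.w q.pos s = 0 := by rw [q.symm]; exact hq0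
    have hInv : InvP j q := by
      refine ⟨hq2, ?_, ?_, ?_⟩
      · intro u v huv
        by_cases hcond : (u = s ∧ v = q.pos) ∨ (u = q.pos ∧ v = s)
        · rcases hcond with ⟨rfl, rfl⟩ | ⟨rfl, rfl⟩ <;> assumption
        · rw [hrest u v hcond]
          unfold ssbW
          rw [if_neg]
          rintro (hcross | ⟨hu2, hv2, huvne⟩)
          · exact huv hcross
          · apply hcond
            have : (u.val = s.val ∧ v.val = q.pos.val) ∨
                (u.val = q.pos.val ∧ v.val = s.val) := by omega
            rcases this with ⟨h1, h2⟩ | ⟨h1, h2⟩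
            · exact Or.inl ⟨Fin.ext h1, Fin.ext h2⟩
            · exact Or.inr ⟨Fin.ext h1, Fin.ext h2⟩
      · intro v hv
        rw [hrest 0 v (by rintro (⟨h1, rfl⟩ | ⟨h1, rfl⟩) <;> omega),
          hrest 1 v (by rintro (⟨h1, rfl⟩ | ⟨h1, rfl⟩) <;> omega)]
        have h0 : (0 : Fin (j+2)).val = 0 := by simp
        have h1 : (1 : Fin (j+2)).val = 1 := by simp
        unfold ssbW
        rw [if_pos (Or.inl (Or.inl ⟨by omega, hv⟩)),
          if_pos (Or.inl (Or.inl ⟨by omega, hv⟩))]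
      · intro u v
        by_cases hcond : (u = s ∧ v = q.pos) ∨ (u = q.pos ∧ v = s)
        · rcases hcond with ⟨rfl, rfl⟩ | ⟨rfl, rfl⟩ <;> omega
        · rw [hrest u v hcond]; unfold ssbW; split <;> omega
    exact inv_loses j (countN j q) q le_rfl hInv
  refine ⟨?_, key⟩
  -- the explicit first move: remove the edge `e₁₂`
  set b := otherV j s with hb_def
  have hb_or : (s = 0 ∧ b = 1) ∨ (s = 1 ∧ b = 0) := otherV_spec j s hsv
  have h0v : (0 : Fin (j+2)).val = 0 := by simp
  have h1v : (1 : Fin (j+2)).val = 1 := by simp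
  have hbv : b.val < 2 := by rcases hb_or with ⟨_, h2⟩ | ⟨_, h2⟩ <;> rw [h2] <;> omega
  have hsb : s.val ≠ b.val := by
    rcases hb_or with ⟨h1, h2⟩ | ⟨h1, h2⟩ <;> rw [h1, h2] <;> omega
  have hmove : NimMove ⟨ssbW j, ssbW_symm j, s⟩ ⟨k2W j, k2W_symm j, b⟩ := by
    refine ⟨fun hc => hsb (congrArg Fin.val hc), ?_, ?_⟩
    · show k2W j s b < ssbW j s b
      unfold k2W ssbW
      rw [if_neg (by omega), if_pos (Or.inr ⟨hsv, hbv, hsb⟩)]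
      omega
    · intro u v huv
      show k2W j u v = ssbW j u v
      unfold k2W ssbW
      by_cases hcross : (u.val < 2 ∧ 2 ≤ v.val) ∨ (v.val < 2 ∧ 2 ≤ u.val)
      · rw [if_pos hcross, if_pos (Or.inl hcross)]
      · rw [if_neg hcross, if_neg]
        rintro (h | ⟨hu2, hv2, huvne⟩)
        · exact hcross h
        · apply huv
          have huvne' : u.val ≠ v.val := fun hc => huvne (hc ▸ rfl)
          have : (u.val = s.val ∧ v.val = b.val) ∨
              (u.val = b.val ∧ v.val = s.val) := by omega
          rcases this with ⟨h1, h2⟩ | ⟨h1, h2⟩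
          · exact Or.inl ⟨Fin.ext h1, Fin.ext h2⟩
          · exact Or.inr ⟨Fin.ext h1, Fin.ext h2⟩
  exact ⟨⟨k2W j, k2W_symm j, b⟩, hmove, key _ hmove hbv⟩
end

section
/- Let G be a finite simple graph in which every edge has weight 1, and suppose G contains two mutually adjacent vertices v_1, v_2 (adjacent vertices with the same set of other neighbors), with the indicator piece starting at v_1. Then in Nim on graphs the first player has a winning strategy. -/
/-- Key lemma: if the piece sits on one of two non-adjacent "twin" vertices
(same weights to all other vertices, weight 0 between them), the mover loses. -/
theorem stmt10_key {V : Type} [Fintype V] :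
    ∀ (n : ℕ) (p : NimPos V) (a b : V), (∑ z : V × V, p.w z.1 z.2) ≤ n → p.pos = a → a ≠ b →
      p.w a b = 0 → (∀ x, x ≠ a → x ≠ b → p.w a x = p.w b x) → MoverLoses p := by
  intro n
  induction n using Nat.strong_induction_on with
  | _ n ih =>
  intro p a b hm hpos hab hzero htwin
  classical
  have main : ∀ q, NimMove p q → ∃ r, NimMove q r ∧ MoverLoses r := by
    intro q h
    obtain ⟨hne, hlt, hoth⟩ := h
    rw [hpos] at hne hlt hoth
    set x := q.pos with hx
    have hax : a ≠ x := hne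
    have hbx : b ≠ x := by
      intro e
      rw [← e, hzero] at hlt
      exact absurd hlt (Nat.not_lt_zero _)
    have hqbx : q.w b x = p.w b x :=
      hoth b x (by rintro (⟨e, -⟩ | ⟨e, -⟩); exacts [hab e.symm, hbx e])
    have hpbx : p.w b x = p.w a x := (htwin x (Ne.symm hax) (Ne.symm hbx)).symm
    refine ⟨⟨fun u v => if (u = x ∧ v = b) ∨ (u = b ∧ v = x) then q.w a x else q.w u v,
      fun u v => ?_, b⟩, ⟨fun e => hbx e.symm, ?_, ?_⟩, ?_⟩
    · have hc : ((u = x ∧ v = b) ∨ (u = b ∧ v = x)) ↔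
          ((v = x ∧ u = b) ∨ (v = b ∧ u = x)) := by tauto
      exact if_congr hc rfl (q.symm u v)
    · show (if (x = x ∧ b = b) ∨ (x = b ∧ b = x) then q.w a x else q.w x b) < q.w x b
      rw [if_pos (Or.inl ⟨rfl, rfl⟩), q.symm x b, hqbx, hpbx]
      exact hlt
    · intro u v huv
      exact if_neg huv
    · -- the response position is again a twin position with smaller total weight
      have hle : ∀ u v, (if (u = x ∧ v = b) ∨ (u = b ∧ v = x) then q.w a x else q.w u v)
          ≤ p.w u v := by
        intro u v
        by_cases hc : (u = x ∧ v = b) ∨ (u = b ∧ v = x)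
        · rw [if_pos hc]
          rcases hc with ⟨e1, e2⟩ | ⟨e1, e2⟩ <;> rw [e1, e2]
          · rw [p.symm x b, hpbx]; exact hlt.le
          · rw [hpbx]; exact hlt.le
        · rw [if_neg hc]
          by_cases hd : (u = a ∧ v = x) ∨ (u = x ∧ v = a)
          · rcases hd with ⟨e1, e2⟩ | ⟨e1, e2⟩ <;> rw [e1, e2]
            · exact hlt.le
            · rw [q.symm x a, p.symm x a]; exact hlt.le
          · rw [hoth u v hd]
      have hstrict : (if (a = x ∧ x = b) ∨ (a = b ∧ x = x) then q.w a x else q.w a x)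
          < p.w a x := by
        rw [if_neg (by rintro (⟨e, -⟩ | ⟨e, -⟩); exacts [hax e, hab e])]
        exact hlt
      have hsum : (∑ z : V × V,
          (if (z.1 = x ∧ z.2 = b) ∨ (z.1 = b ∧ z.2 = x) then q.w a x else q.w z.1 z.2))
          < ∑ z : V × V, p.w z.1 z.2 := by
        refine Finset.sum_lt_sum (fun z _ => hle z.1 z.2) ⟨(a, x), Finset.mem_univ _, ?_⟩
        exact hstrict
      refine ih _ (lt_of_lt_of_le hsum hm) _ b a le_rfl rfl (Ne.symm hab) ?_ ?_
      · show (if (b = x ∧ a = b) ∨ (b = b ∧ a = x) then q.w a x else q.w b a) = 0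
        rw [if_neg (by rintro (⟨e, -⟩ | ⟨-, e⟩); exacts [hbx e, hax e])]
        rw [hoth b a (by rintro (⟨e, -⟩ | ⟨e, -⟩); exacts [hab e.symm, hbx e]),
          p.symm, hzero]
      · intro y hyb hya
        have hN1 : ¬((a = x ∧ y = b) ∨ (a = b ∧ y = x)) := by
          rintro (⟨e, -⟩ | ⟨e, -⟩); exacts [hax e, hab e]
        show (if (b = x ∧ y = b) ∨ (b = b ∧ y = x) then q.w a x else q.w b y)
            = (if (a = x ∧ y = b) ∨ (a = b ∧ y = x) then q.w a x else q.w a y)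
        rw [if_neg hN1]
        by_cases hyx : y = x
        · rw [if_pos (Or.inr ⟨rfl, hyx⟩), hyx]
        · have hN2 : ¬((b = x ∧ y = b) ∨ (b = b ∧ y = x)) := by
            rintro (⟨e, -⟩ | ⟨-, e⟩); exacts [hbx e, hyx e]
          rw [if_neg hN2,
            hoth b y (by rintro (⟨e, -⟩ | ⟨e, -⟩); exacts [hab e.symm, hbx e]),
            (htwin y hya hyb).symm,
            ← hoth a y (by rintro (⟨-, e⟩ | ⟨e, -⟩); exacts [hyx e, hax e])]
  exact MoverLoses.intro p (fun q h => (main q h).choose)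
    (fun q h => (main q h).choose_spec.1) (fun q h => (main q h).choose_spec.2)

/-- Nim with all edge weights 1 on a finite simple graph
containing two mutually adjacent vertices `v₁, v₂` (adjacent, and every other
vertex is adjacent to both or neither), piece starting at `v₁`: the first
player wins. -/
theorem stmt10 {V : Type} [Fintype V] (G : SimpleGraph V) [DecidableRel G.Adj]
    (v1 v2 : V) (hadj : G.Adj v1 v2)
    (hmut : ∀ w, w ≠ v1 → w ≠ v2 → (G.Adj v1 w ↔ G.Adj v2 w)) :
    MoverWins ⟨fun a b => if G.Adj a b then 1 else 0,
      fun a b => if_congr (G.adj_comm a b) rfl rfl, v1⟩ :=  by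
  classical
  refine ⟨⟨fun u v => if (u = v1 ∧ v = v2) ∨ (u = v2 ∧ v = v1) then 0
      else (if G.Adj u v then 1 else 0), fun u v => ?_, v2⟩, ⟨hadj.ne, ?_, ?_⟩, ?_⟩
  · exact if_congr (by tauto) rfl (if_congr (G.adj_comm u v) rfl rfl)
  · show (if (v1 = v1 ∧ v2 = v2) ∨ (v1 = v2 ∧ v2 = v1) then 0
        else (if G.Adj v1 v2 then 1 else 0)) < (if G.Adj v1 v2 then 1 else 0)
    rw [if_pos (Or.inl ⟨rfl, rfl⟩), if_pos hadj]
    norm_num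
  · intro u v huv
    exact if_neg huv
  · refine stmt10_key _ _ v2 v1 le_rfl rfl hadj.ne' ?_ ?_
    · show (if (v2 = v1 ∧ v1 = v2) ∨ (v2 = v2 ∧ v1 = v1) then 0
          else (if G.Adj v2 v1 then 1 else 0)) = 0
      rw [if_pos (Or.inr ⟨rfl, rfl⟩)]
    · intro y h2 h1
      have hN1 : ¬((v2 = v1 ∧ y = v2) ∨ (v2 = v2 ∧ y = v1)) := by
        rintro (⟨e, -⟩ | ⟨-, e⟩); exacts [hadj.ne' e, h1 e]
      have hN2 : ¬((v1 = v1 ∧ y = v2) ∨ (v1 = v2 ∧ y = v1)) := by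
        rintro (⟨-, e⟩ | ⟨e, -⟩); exacts [h2 e, hadj.ne e]
      show (if (v2 = v1 ∧ y = v2) ∨ (v2 = v2 ∧ y = v1) then 0
          else (if G.Adj v2 y then 1 else 0))
        = (if (v1 = v1 ∧ y = v2) ∨ (v1 = v2 ∧ y = v1) then 0
          else (if G.Adj v1 y then 1 else 0))
      rw [if_neg hN1, if_neg hN2]
      exact if_congr (hmut y h1 h2).symm rfl rfl
end
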